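/- arXiv:1812.09995 — 5 statements merged into one kernel-verified Lean document; each statement's English description precedes it below -/
import Mathlib

section
/- Let A be the unital subalgebra of M₃(ℂ) ⊕ M₃(ℂ) consisting of pairs of matrices (λI₃ + αE₁₂ + βE₁₃, λI₃ − βE₁₃ + αE₂₃) for λ, α, β ∈ ℂ. Then the C*-algebra generated by A inside M₃(ℂ) ⊕ M₃(ℂ) is all of M₃(ℂ) ⊕ M₃(ℂ). -/
open Matrix

/-- The generic element of the unital Jordan operator algebra
`A ⊆ M₃(ℂ) ⊕ M₃(ℂ)` of pairs `(λI + αE₁₂ + βE₁₃, λI − βE₁₃ + αE₂₃)`. -/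
def stmt3elt (l a b : ℂ) : Matrix (Fin 3) (Fin 3) ℂ × Matrix (Fin 3) (Fin 3) ℂ :=
  (l • 1 + a • Matrix.single 0 1 1 + b • Matrix.single 0 2 1,
   l • 1 - b • Matrix.single 0 2 1 + a • Matrix.single 1 2 1)

local notation "E[" i "," j "]" => Matrix.single i j (1:ℂ)

lemma conjT_std (i j : Fin 3) : (Matrix.single i j (1:ℂ))ᴴ = Matrix.single j i 1 := by
  ext a b
  simp [Matrix.conjTranspose_apply, Matrix.single, and_comm, apply_ite (star : ℂ → ℂ)]

lemma one_eq_sum : (1 : Matrix (Fin 3) (Fin 3) ℂ) =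
    E[(0:Fin 3),0] + E[(1:Fin 3),1] + E[(2:Fin 3),2] := by
  ext i j
  fin_cases i <;> fin_cases j <;> simp [Matrix.one_apply, Matrix.single]

/-- The C*-algebra (star subalgebra) generated by `A` inside `M₃(ℂ) ⊕ M₃(ℂ)`
is all of `M₃(ℂ) ⊕ M₃(ℂ)`. -/
theorem stmt3 :
    StarAlgebra.adjoin ℂ {x : Matrix (Fin 3) (Fin 3) ℂ × Matrix (Fin 3) (Fin 3) ℂ |
      ∃ l a b : ℂ, x = stmt3elt l a b} = ⊤ := by
  set T := StarAlgebra.adjoin ℂ {x : Matrix (Fin 3) (Fin 3) ℂ × Matrix (Fin 3) (Fin 3) ℂ |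
      ∃ l a b : ℂ, x = stmt3elt l a b} with hT
  -- generators
  have hx : ((E[(0:Fin 3),1], E[(1:Fin 3),2]) : _ × _) ∈ T := by
    have h : ((E[(0:Fin 3),1], E[(1:Fin 3),2]) : _ × _) = stmt3elt 0 1 0 := by
      simp [stmt3elt]
    rw [h]; exact StarAlgebra.subset_adjoin ℂ _ ⟨0, 1, 0, rfl⟩
  have hy : ((E[(0:Fin 3),2], -E[(0:Fin 3),2]) : _ × _) ∈ T := by
    have h : ((E[(0:Fin 3),2], -E[(0:Fin 3),2]) : _ × _) = stmt3elt 0 0 1 := by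
      simp [stmt3elt]
    rw [h]; exact StarAlgebra.subset_adjoin ℂ _ ⟨0, 0, 1, rfl⟩
  -- products
  have hxs : ((E[(1:Fin 3),0], E[(2:Fin 3),1]) : _ × _) ∈ T := by
    have := star_mem hx
    simpa [Prod.star_def, Matrix.star_eq_conjTranspose, conjT_std] using this
  have hys : ((E[(2:Fin 3),0], -E[(2:Fin 3),0]) : _ × _) ∈ T := by
    have := star_mem hy
    simpa [Prod.star_def, Matrix.star_eq_conjTranspose, conjT_std] using this
  have hp1 : ((E[(0:Fin 3),0], E[(1:Fin 3),1]) : _ × _) ∈ T := by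
    have := mul_mem hx hxs
    simpa [Prod.mk_mul_mk] using this
  have hp2 : ((E[(1:Fin 3),1], E[(2:Fin 3),2]) : _ × _) ∈ T := by
    have := mul_mem hxs hx
    simpa [Prod.mk_mul_mk] using this
  have hq1 : ((E[(0:Fin 3),0], E[(0:Fin 3),0]) : _ × _) ∈ T := by
    have := mul_mem hy hys
    simpa [Prod.mk_mul_mk] using this
  have hq2 : ((E[(2:Fin 3),2], E[(2:Fin 3),2]) : _ × _) ∈ T := by
    have := mul_mem hys hy
    simpa [Prod.mk_mul_mk] using this
  -- (E00, 0)
  have h00 : ((E[(0:Fin 3),0], 0) : _ × _) ∈ T := by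
    have := mul_mem hp1 hq1
    simpa [Prod.mk_mul_mk] using this
  -- (0, E00)
  have h00' : ((0, E[(0:Fin 3),0]) : _ × _) ∈ T := by
    have := sub_mem hq1 h00
    simpa using this
  -- (0, E22)
  have h22' : ((0, E[(2:Fin 3),2]) : _ × _) ∈ T := by
    have := mul_mem hp2 hq2
    simpa [Prod.mk_mul_mk] using this
  -- (E22, 0)
  have h22 : ((E[(2:Fin 3),2], 0) : _ × _) ∈ T := by
    have := sub_mem hq2 h22'
    simpa using this
  -- (E11, 0)
  have h11 : ((E[(1:Fin 3),1], 0) : _ × _) ∈ T := by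
    have := sub_mem hp2 h22'
    simpa using this
  -- (0, E11)
  have h11' : ((0, E[(1:Fin 3),1]) : _ × _) ∈ T := by
    have := sub_mem hp1 h00
    simpa using this
  -- (E01, 0) = x * (E11, 0)
  have h01 : ((E[(0:Fin 3),1], 0) : _ × _) ∈ T := by
    have := mul_mem hx h11
    simpa [Prod.mk_mul_mk] using this
  -- (E02, 0) = y * (E22, 0)
  have h02 : ((E[(0:Fin 3),2], 0) : _ × _) ∈ T := by
    have := mul_mem hy h22
    simpa [Prod.mk_mul_mk] using this
  -- (0, E12) = (0,E11) * x
  have h12' : ((0, E[(1:Fin 3),2]) : _ × _) ∈ T := by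
    have := mul_mem h11' hx
    simpa [Prod.mk_mul_mk] using this
  -- (0, E02) = -(y - (E02,0))
  have h02' : ((0, E[(0:Fin 3),2]) : _ × _) ∈ T := by
    have := neg_mem (sub_mem hy h02)
    simpa [Prod.neg_mk] using this
  -- (0, E01) = (0,E02) * star (0,E12)
  have h01' : ((0, E[(0:Fin 3),1]) : _ × _) ∈ T := by
    have := mul_mem h02' (star_mem h12')
    simpa [Prod.star_def, Prod.mk_mul_mk, Matrix.star_eq_conjTranspose, conjT_std] using this
  -- rows
  have row1 : ∀ j : Fin 3, (((E[(0:Fin 3),j]), 0) : _ × _) ∈ T := by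
    intro j; fin_cases j <;> assumption
  have row2 : ∀ j : Fin 3, ((0, (E[(0:Fin 3),j])) : _ × _) ∈ T := by
    intro j; fin_cases j <;> assumption
  -- all matrix units
  have all1 : ∀ i j : Fin 3, ((E[i,j], 0) : _ × _) ∈ T := by
    intro i j
    have := mul_mem (star_mem (row1 i)) (row1 j)
    simpa [Prod.star_def, Prod.mk_mul_mk, Matrix.star_eq_conjTranspose, conjT_std] using this
  have all2 : ∀ i j : Fin 3, ((0, E[i,j]) : _ × _) ∈ T := by
    intro i j
    have := mul_mem (star_mem (row2 i)) (row2 j)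
    simpa [Prod.star_def, Prod.mk_mul_mk, Matrix.star_eq_conjTranspose, conjT_std] using this
  -- conclude
  rw [eq_top_iff]
  rintro ⟨M, N⟩ -
  have hM : ((M, 0) : _ × _) ∈ T := by
    have hrep : ((M, 0) : _ × _)
        = ∑ i : Fin 3, ∑ j : Fin 3, M i j • ((E[i,j]), (0 : Matrix (Fin 3) (Fin 3) ℂ)) := by
      rw [Prod.ext_iff]
      constructor
      · simp only [Prod.fst_sum, Prod.smul_mk, Matrix.smul_single, smul_eq_mul, mul_one]
        exact Matrix.matrix_eq_sum_single M
      · simp [Prod.snd_sum]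
    rw [hrep]
    exact sum_mem fun i _ => sum_mem fun j _ => SMulMemClass.smul_mem _ (all1 i j)
  have hN : ((0, N) : _ × _) ∈ T := by
    have hrep : ((0, N) : _ × _)
        = ∑ i : Fin 3, ∑ j : Fin 3, N i j • ((0 : Matrix (Fin 3) (Fin 3) ℂ), (E[i,j])) := by
      rw [Prod.ext_iff]
      constructor
      · simp [Prod.fst_sum]
      · simp only [Prod.snd_sum, Prod.smul_mk, Matrix.smul_single, smul_eq_mul, mul_one]
        exact Matrix.matrix_eq_sum_single N
    rw [hrep]
    exact sum_mem fun i _ => sum_mem fun j _ => SMulMemClass.smul_mem _ (all2 i j)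
  have : ((M, N) : _ × _) = (M, 0) + (0, N) := by simp
  rw [this]
  exact add_mem hM hN
end

section
/- Let A be a Jordan operator algebra and x ∈ A real positive (x + x* ≥ 0). If there exists y ∈ A with xyx = x, then xAx = {xax : a ∈ A} is norm-closed. Conversely, if xAx is norm-closed, then there exists y ∈ A with xyx = x. -/
set_option synthInstance.maxHeartbeats 1000000
set_option maxHeartbeats 1000000
set_option linter.unusedSectionVars false

section aux
variable {H : Type*} [NormedAddCommGroup H] [InnerProductSpace ℂ H] [CompleteSpace H]

/-- triple products stay in a subspace closed under squares -/
lemma my_triple (A : Submodule ℂ (H →L[ℂ] H)) (hsq : ∀ a ∈ A, a * a ∈ A)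
    {a b : H →L[ℂ] H} (ha : a ∈ A) (hb : b ∈ A) : a * b * a ∈ A := by
  have jord : ∀ u ∈ A, ∀ v ∈ A, u*v + v*u ∈ A := by
    intro u hu v hv
    have h1 : (u+v)*(u+v) ∈ A := hsq _ (A.add_mem hu hv)
    have e : u*v + v*u = (u+v)*(u+v) - u*u - v*v := by noncomm_ring
    rw [e]; exact A.sub_mem (A.sub_mem h1 (hsq _ hu)) (hsq _ hv)
  have h1 : a*(a*b+b*a) + (a*b+b*a)*a ∈ A := jord _ ha _ (jord _ ha _ hb)
  have h2 : (a*a)*b + b*(a*a) ∈ A := jord _ (hsq _ ha) _ hb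
  have e : (a*(a*b+b*a) + (a*b+b*a)*a) - ((a*a)*b + b*(a*a)) = a*b*a + a*b*a := by
    noncomm_ring
  have key : a*b*a = (2:ℂ)⁻¹ • ((a*(a*b+b*a) + (a*b+b*a)*a) - ((a*a)*b + b*(a*a))) := by
    rw [e, ← two_smul ℂ (a*b*a), smul_smul]
    norm_num
  rw [key]
  exact A.smul_mem _ (A.sub_mem h1 h2)

lemma my_pow (A : Submodule ℂ (H →L[ℂ] H)) (hsq : ∀ a ∈ A, a * a ∈ A)
    {x : H →L[ℂ] H} (hx : x ∈ A) : ∀ n : ℕ, x^(n+1) ∈ A := by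
  have key : ∀ n : ℕ, x^(n+1) ∈ A ∧ x^(n+2) ∈ A := by
    intro n
    induction n with
    | zero => exact ⟨by rwa [pow_one], by rw [pow_two]; exact hsq _ hx⟩
    | succ n ih =>
      refine ⟨ih.2, ?_⟩
      have h := my_triple A hsq hx ih.1
      have e : x * x^(n+1) * x = x^(n+1+2) := by
        rw [← pow_succ' x (n+1), ← pow_succ]
      rwa [e] at h
  exact fun n => (key n).1

lemma my_re (x : H →L[ℂ] H) (hacc : ∀ v : H, 0 ≤ Complex.re (inner ℂ (x v) v))
    (t : ℝ) (v : H) : t * ‖v‖^2 ≤ Complex.re (inner ℂ ((((t:ℂ)•1 + x) : H →L[ℂ] H) v) v) := by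
  have hv : (((t:ℂ)•1 + x) : H →L[ℂ] H) v = (t:ℂ)•v + x v := by simp
  rw [hv, inner_add_left, Complex.add_re, inner_smul_left, Complex.conj_ofReal,
    Complex.re_ofReal_mul]
  have h1 : Complex.re (inner ℂ v v : ℂ) = ‖v‖^2 := by
    have := inner_self_eq_norm_sq (𝕜 := ℂ) v
    simpa [RCLike.re_to_complex] using this
  rw [h1]
  linarith [hacc v]

lemma my_low (x : H →L[ℂ] H) (hacc : ∀ v : H, 0 ≤ Complex.re (inner ℂ (x v) v))
    {t : ℝ} (ht : 0 < t) (v : H) : t * ‖v‖ ≤ ‖(((t:ℂ)•1 + x : H →L[ℂ] H)) v‖ := by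
  set T : H →L[ℂ] H := (t:ℂ)•1 + x with hT
  have hre := my_re x hacc t v
  have habs : Complex.re (inner ℂ (T v) v) ≤ ‖T v‖ * ‖v‖ := by
    calc Complex.re (inner ℂ (T v) v) ≤ ‖(inner ℂ (T v) v : ℂ)‖ := Complex.re_le_norm _
      _ ≤ ‖T v‖ * ‖v‖ := norm_inner_le_norm _ _
  rcases eq_or_lt_of_le (norm_nonneg v) with h0 | h0
  · rw [← h0, mul_zero]; exact norm_nonneg _
  · have := hre.trans habs
    nlinarith

lemma my_unit (x : H →L[ℂ] H) (hacc : ∀ v : H, 0 ≤ Complex.re (inner ℂ (x v) v))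
    {t : ℝ} (ht : 0 < t) : IsUnit ((t:ℂ)•1 + x : H →L[ℂ] H) := by
  set T : H →L[ℂ] H := (t:ℂ)•1 + x with hT
  have hlow := my_low x hacc ht
  have hker : LinearMap.ker (T : H →ₗ[ℂ] H) = ⊥ := by
    rw [LinearMap.ker_eq_bot']
    intro v hv
    have h := hlow v
    rw [show T v = 0 from hv, norm_zero] at h
    have : ‖v‖ ≤ 0 := by nlinarith
    simpa using le_antisymm this (norm_nonneg v)
  have antilip : AntilipschitzWith (⟨t⁻¹, by positivity⟩ : NNReal) T := by
    apply T.antilipschitz_of_bound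
    intro v
    show ‖v‖ ≤ t⁻¹ * ‖T v‖
    calc ‖v‖ = t⁻¹ * (t * ‖v‖) := by field_simp
      _ ≤ t⁻¹ * ‖T v‖ :=
        mul_le_mul_of_nonneg_left (hlow v) (by positivity)
  have hclosed : IsClosed (LinearMap.range (T : H →ₗ[ℂ] H) : Set H) := by
    have h := antilip.isClosed_range T.uniformContinuous
    convert h using 1
    exact LinearMap.coe_range _
  haveI : CompleteSpace (LinearMap.range (T : H →ₗ[ℂ] H)) := hclosed.completeSpace_coe
  have horth : (LinearMap.range (T : H →ₗ[ℂ] H))ᗮ = ⊥ := by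
    rw [Submodule.eq_bot_iff]
    intro w hw
    have h0 : inner ℂ (T w) w = (0:ℂ) :=
      (Submodule.mem_orthogonal (LinearMap.range (T : H →ₗ[ℂ] H)) w).mp hw (T w) (LinearMap.mem_range_self _ w)
    have hre := my_re x hacc t w
    rw [show (((t:ℂ)•1 + x : H →L[ℂ] H)) w = T w from rfl, h0, Complex.zero_re] at hre
    have hz : ‖w‖ = 0 := by
      by_contra hne
      have hp : 0 < ‖w‖ := (norm_nonneg w).lt_of_ne (Ne.symm hne)
      nlinarith [mul_pos (mul_pos ht hp) hp]
    simpa using hz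
  have hsurj : LinearMap.range (T : H →ₗ[ℂ] H) = ⊤ := Submodule.orthogonal_eq_bot_iff.mp horth
  let e := ContinuousLinearEquiv.ofBijective T hker hsurj
  refine ⟨⟨T, (e.symm : H →L[ℂ] H), ?_, ?_⟩, rfl⟩
  · ext v
    show T (e.symm v) = v
    have h : T (e.symm v) = e (e.symm v) := rfl
    rw [h, e.apply_symm_apply]
  · ext v
    show e.symm (T v) = v
    have h : T v = e v := rfl
    rw [h, e.symm_apply_apply]

lemma my_neumann (A : Submodule ℂ (H →L[ℂ] H)) (hA : IsClosed (A : Set (H →L[ℂ] H)))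
    (hsq : ∀ a ∈ A, a * a ∈ A) {x : H →L[ℂ] H} (hx : x ∈ A)
    {t : ℝ} (ht : ‖x‖ < t) :
    x * (Ring.inverse ((t:ℂ)•1 + x : H →L[ℂ] H) * Ring.inverse ((t:ℂ)•1 + x : H →L[ℂ] H)) ∈ A := by
  have ht0 : 0 < t := lt_of_le_of_lt (norm_nonneg x) ht
  set c : ℂ := (t:ℂ) with hc
  have hcne : c ≠ 0 := by
    simp [hc, Complex.ofReal_ne_zero]; positivity
  set w : H →L[ℂ] H := (-(c⁻¹)) • x with hwdef
  have hw : ‖w‖ < 1 := by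
    rw [hwdef, norm_smul, norm_neg, norm_inv]
    have hcnorm : ‖c‖ = t := by
      rw [hc, Complex.norm_real, Real.norm_eq_abs, abs_of_pos ht0]
    rw [hcnorm]
    rw [inv_mul_lt_iff₀ ht0, mul_one]
    exact ht
  set S : H →L[ℂ] H := ∑' n : ℕ, w ^ n with hS
  have hvalinv : (1 - w) * S = 1 := mul_neg_geom_series w hw
  have hinvval : S * (1 - w) = 1 := geom_series_mul_neg w hw
  have hTw : ((t:ℂ)•1 + x : H →L[ℂ] H) = c • (1 - w) := by
    rw [hwdef, smul_sub, smul_smul]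
    have h2 : c * -c⁻¹ = -1 := by field_simp
    rw [h2, hc]
    simp
  have hmul1 : ((t:ℂ)•1 + x : H →L[ℂ] H) * (c⁻¹ • S) = 1 := by
    rw [hTw, smul_mul_smul_comm, mul_inv_cancel₀ hcne, one_smul, hvalinv]
  have hmul2 : (c⁻¹ • S) * ((t:ℂ)•1 + x : H →L[ℂ] H) = 1 := by
    rw [hTw, smul_mul_smul_comm, inv_mul_cancel₀ hcne, one_smul, hinvval]
  have hR : Ring.inverse ((t:ℂ)•1 + x : H →L[ℂ] H) = c⁻¹ • S := by
    let U : (H →L[ℂ] H)ˣ := ⟨(t:ℂ)•1 + x, c⁻¹ • S, hmul1, hmul2⟩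
    have : ((t:ℂ)•1 + x : H →L[ℂ] H) = (U : H →L[ℂ] H) := rfl
    rw [this, Ring.inverse_unit]
    rfl
  rw [hR]
  have heq : x * ((c⁻¹ • S) * (c⁻¹ • S)) = (c⁻¹ * c⁻¹) • (x * (S * S)) := by
    rw [smul_mul_smul_comm, mul_smul_comm]
  rw [heq]
  refine A.smul_mem _ ?_
  -- now show x * (S * S) ∈ A
  have hnorm : Summable (fun n : ℕ => ‖w ^ n‖) := by
    have hg : Summable (fun n : ℕ => ‖w‖ ^ (n+1)) := by
      simpa [pow_succ'] using (summable_geometric_of_lt_one (norm_nonneg w) hw).mul_left ‖w‖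
    have h1 : Summable (fun n : ℕ => ‖w ^ (n+1)‖) :=
      Summable.of_nonneg_of_le (fun n => norm_nonneg _) (fun n => norm_pow_le' w n.succ_pos) hg
    exact (summable_nat_add_iff (f := fun n => ‖w ^ n‖) 1).mp h1
  have hmulsum : Summable (fun p : ℕ × ℕ => w ^ p.1 * w ^ p.2) :=
    summable_mul_of_summable_norm hnorm hnorm
  have hts : S * S = ∑' p : ℕ × ℕ, w ^ p.1 * w ^ p.2 :=
    tsum_mul_tsum_of_summable_norm hnorm hnorm
  have hhs : HasSum (fun p : ℕ × ℕ => w ^ p.1 * w ^ p.2) (S * S) := by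
    rw [hts]; exact hmulsum.hasSum
  have htend : Filter.Tendsto (fun s : Finset (ℕ × ℕ) => x * ∑ p ∈ s, w ^ p.1 * w ^ p.2)
      Filter.atTop (nhds (x * (S * S))) :=
    ((continuous_mul_left x).tendsto _).comp hhs
  refine hA.mem_of_tendsto htend (Filter.Eventually.of_forall ?_)
  intro s
  show x * ∑ p ∈ s, w ^ p.1 * w ^ p.2 ∈ A
  rw [Finset.mul_sum]
  refine A.sum_mem ?_
  intro p _
  have hterm : x * (w ^ p.1 * w ^ p.2)
      = ((-(c⁻¹)) ^ p.1 * (-(c⁻¹)) ^ p.2) • x ^ (p.1 + p.2 + 1) := by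
    rw [hwdef, smul_pow, smul_pow, smul_mul_smul_comm, ← pow_add, mul_smul_comm]
    congr 1
    rw [← pow_add, ← pow_succ']
  rw [hterm]
  exact A.smul_mem _ (my_pow A hsq hx _)

lemma my_est (x B : H →L[ℂ] H) {t : ℝ} (ht : 0 < t)
    (hTB : ((t:ℂ)•1 + x) * B = 1) (hBT : B * ((t:ℂ)•1 + x) = 1)
    (hB : ‖B‖ ≤ t⁻¹) :
    ‖x - x * (x * (B * B)) * x‖ ≤ 10 * t := by
  set c : ℂ := (t:ℂ) with hc
  have hcn : ‖c‖ = t := by rw [hc, Complex.norm_real, Real.norm_eq_abs, abs_of_pos ht]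
  -- x * B = 1 - c • B
  have hxB1 : x * B = 1 - c • B := by
    have h := hTB
    rw [add_mul, smul_mul_assoc, one_mul] at h
    linear_combination (norm := abel) h
  have hxBn : ‖x * B‖ ≤ 2 := by
    rw [hxB1]
    calc ‖(1 : H →L[ℂ] H) - c • B‖ ≤ ‖(1 : H →L[ℂ] H)‖ + ‖c • B‖ := norm_sub_le _ _
      _ ≤ 1 + t * t⁻¹ := by
          refine add_le_add ContinuousLinearMap.norm_id_le ?_
          rw [norm_smul, hcn]
          exact mul_le_mul_of_nonneg_left hB ht.le
      _ ≤ 2 := by rw [mul_inv_cancel₀ ht.ne']; norm_num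
  -- commutation
  have hxB : x * B = B * x := by
    have e3 : x * ((t:ℂ)•1 + x) = ((t:ℂ)•1 + x) * x := by
      simp only [mul_add, add_mul, mul_smul_comm, smul_mul_assoc, one_mul, mul_one]
    calc x * B = (B * ((t:ℂ)•1 + x)) * (x * B) := by rw [hBT, one_mul]
      _ = B * ((((t:ℂ)•1 + x) * x) * B) := by simp only [mul_assoc]
      _ = B * ((x * ((t:ℂ)•1 + x)) * B) := by rw [e3]
      _ = (B * x) * (((t:ℂ)•1 + x) * B) := by simp only [mul_assoc]
      _ = B * x := by rw [hTB, mul_one]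
  have cxB : Commute x B := hxB
  have cxBB : Commute x (B * B) := cxB.mul_right cxB
  have hz : x * (x * (B * B)) * x = x * (x * (x * (B * B))) := by
    rw [mul_assoc, mul_assoc, ← cxBB.eq]
  have hxa : x * (x * (B * B)) = (x * B) * (x * B) := by
    calc (x * (x * (B * B))) = x * ((x * B) * B) := by simp only [mul_assoc]
      _ = x * ((B * x) * B) := by rw [hxB]
      _ = (x * B) * (x * B) := by simp only [mul_assoc]
  -- main identity
  have h1 : ((t:ℂ)•1 + x) * (B * B) = B := by rw [← mul_assoc, hTB, one_mul]
  have h2 : ((t:ℂ)•1 + x) * (((t:ℂ)•1 + x) * (B * B)) = 1 := by rw [h1, hTB]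
  have e1 : x = (c*c) • (x * (B * B)) + ((2:ℂ)*c) • (x * (x * (B * B)))
      + x * (x * (x * (B * B))) := by
    calc x = x * (((t:ℂ)•1 + x) * (((t:ℂ)•1 + x) * (B * B))) := by rw [h2, mul_one]
      _ = (c*c) • (x * (B * B)) + ((2:ℂ)*c) • (x * (x * (B * B)))
          + x * (x * (x * (B * B))) := by
        simp only [mul_add, add_mul, smul_mul_assoc, mul_smul_comm, smul_add, smul_smul,
          one_mul, mul_one, ← hc]
        module
  have e2 : x - x * (x * (B * B)) * x
      = (c*c) • (x * (B * B)) + ((2:ℂ)*c) • (x * (x * (B * B))) := by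
    rw [hz]
    nth_rewrite 1 [e1]
    abel
  -- norms
  have n1 : ‖x * (B * B)‖ ≤ 2 * t⁻¹ := by
    calc ‖x * (B * B)‖ = ‖(x * B) * B‖ := by rw [mul_assoc]
      _ ≤ ‖x * B‖ * ‖B‖ := norm_mul_le _ _
      _ ≤ 2 * t⁻¹ := mul_le_mul hxBn hB (norm_nonneg _) (by norm_num)
  have n2 : ‖x * (x * (B * B))‖ ≤ 4 := by
    rw [hxa]
    calc ‖(x * B) * (x * B)‖ ≤ ‖x * B‖ * ‖x * B‖ := norm_mul_le _ _
      _ ≤ 2 * 2 := mul_le_mul hxBn hxBn (norm_nonneg _) (by norm_num)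
      _ = 4 := by norm_num
  rw [e2]
  calc ‖(c*c) • (x * (B * B)) + ((2:ℂ)*c) • (x * (x * (B * B)))‖
      ≤ ‖(c*c) • (x * (B * B))‖ + ‖((2:ℂ)*c) • (x * (x * (B * B)))‖ := norm_add_le _ _
    _ ≤ (t*t) * (2 * t⁻¹) + (2*t) * 4 := by
        refine add_le_add ?_ ?_
        · rw [norm_smul, norm_mul, hcn]
          exact mul_le_mul_of_nonneg_left n1 (by positivity)
        · rw [norm_smul, norm_mul, hcn]
          have : ‖(2:ℂ)‖ = 2 := by norm_num
          rw [this]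
          exact mul_le_mul_of_nonneg_left n2 (by positivity)
    _ = 10 * t := by field_simp; ring

lemma my_mem_all (A : Submodule ℂ (H →L[ℂ] H)) (hA : IsClosed (A : Set (H →L[ℂ] H)))
    (hsq : ∀ a ∈ A, a * a ∈ A) {x : H →L[ℂ] H} (hx : x ∈ A)
    (hacc : ∀ v : H, 0 ≤ Complex.re (inner ℂ (x v) v))
    {t₀ : ℝ} (ht₀ : 0 < t₀) :
    x * (Ring.inverse ((t₀:ℂ)•1 + x : H →L[ℂ] H) * Ring.inverse ((t₀:ℂ)•1 + x : H →L[ℂ] H)) ∈ A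
    := by
  set g : ℝ → (H →L[ℂ] H) := fun t =>
    x * (Ring.inverse ((t:ℂ)•1 + x : H →L[ℂ] H) * Ring.inverse ((t:ℂ)•1 + x : H →L[ℂ] H))
    with hg
  by_contra hnot
  -- separation
  obtain ⟨f, u, hf⟩ := geometric_hahn_banach_closed_point
    (s := (A : Set (H →L[ℂ] H))) (x := g t₀) ((A.restrictScalars ℝ).convex) hA hnot
  have hzero : ∀ a ∈ A, f a = 0 := by
    intro a ha
    by_contra hfa
    have hs : ∀ s : ℝ, f (s • a) < u := fun s =>
      hf.1 _ ((A.restrictScalars ℝ).smul_mem s ha)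
    have h2 := hs ((u + 1) / f a)
    rw [map_smul, smul_eq_mul, div_mul_cancel₀ _ hfa] at h2
    linarith
  have hu0 : 0 < u := by
    have h0 := hf.1 0 A.zero_mem
    rwa [map_zero] at h0
  have hft : f (g t₀) ≠ 0 := by
    have := hf.2
    intro h
    rw [h] at this
    linarith
  -- analyticity of g on Ioi 0
  have hsm : ∀ (t : ℝ) (y : H →L[ℂ] H), (t:ℂ) • y = t • y := fun t y => rfl
  have hline : ∀ t : ℝ, AnalyticAt ℝ (fun s : ℝ => ((s:ℂ)•1 + x : H →L[ℂ] H)) t := by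
    intro t
    have : (fun s : ℝ => ((s:ℂ)•1 + x : H →L[ℂ] H))
        = fun s : ℝ => s • (1 : H →L[ℂ] H) + x := by
      funext s; rw [hsm]
    rw [this]
    exact (analyticAt_id.smul analyticAt_const).add analyticAt_const
  have hganan : ∀ t ∈ Set.Ioi (0:ℝ), AnalyticAt ℝ g t := by
    intro t ht
    have hu := my_unit x hacc (Set.mem_Ioi.mp ht)
    have hinv : AnalyticAt ℝ (fun s : ℝ => Ring.inverse ((s:ℂ)•1 + x : H →L[ℂ] H)) t := by
      have h1 : AnalyticAt ℝ (Ring.inverse : (H →L[ℂ] H) → (H →L[ℂ] H)) ((t:ℂ)•1 + x) := by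
        have := analyticAt_inverse (𝕜 := ℝ) hu.unit
        rwa [IsUnit.unit_spec] at this
      exact AnalyticAt.comp (f := fun s : ℝ => ((s:ℂ)•1 + x : H →L[ℂ] H)) (x := t) h1 (hline t)
    exact analyticAt_const.mul (hinv.mul hinv)
  have hfg : AnalyticOnNhd ℝ (fun t => f (g t)) (Set.Ioi (0:ℝ)) :=
    fun t ht => (f.analyticAt _).comp (hganan t ht)
  have hev : (fun t => f (g t)) =ᶠ[nhds (‖x‖ + 1)] 0 := by
    filter_upwards [Ioi_mem_nhds (lt_add_one ‖x‖)] with t ht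
    exact hzero _ (my_neumann A hA hsq hx ht)
  have hvan := hfg.eqOn_zero_of_preconnected_of_eventuallyEq_zero isPreconnected_Ioi
    (Set.mem_Ioi.mpr (by positivity : (0:ℝ) < ‖x‖ + 1)) hev
  exact hft (hvan (Set.mem_Ioi.mpr ht₀))

end aux

/-- For a real positive element `x` of a Jordan operator algebra `A`, there is
`y ∈ A` with `xyx = x` if and only if `xAx` is norm closed. -/
theorem stmt9 {H : Type*} [NormedAddCommGroup H] [InnerProductSpace ℂ H] [CompleteSpace H]
    (A : Submodule ℂ (H →L[ℂ] H)) (hA : IsClosed (A : Set (H →L[ℂ] H)))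
    (hsq : ∀ a ∈ A, a * a ∈ A)
    (x : H →L[ℂ] H) (hx : x ∈ A) (hpos : (x + star x).IsPositive) :
    (∃ y ∈ A, x * y * x = x) ↔ IsClosed {z : H →L[ℂ] H | ∃ a ∈ A, z = x * a * x} := by
  constructor
  · rintro ⟨y, hy, hxyx⟩
    have hset : {z : H →L[ℂ] H | ∃ a ∈ A, z = x * a * x}
        = (A : Set (H →L[ℂ] H)) ∩ {z | (x*y) * z * (y*x) = z} := by
      ext z
      constructor
      · rintro ⟨a, ha, rfl⟩
        refine ⟨my_triple A hsq hx ha, ?_⟩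
        show (x*y) * (x*a*x) * (y*x) = x*a*x
        calc (x*y) * (x*a*x) * (y*x) = (x*y*x) * a * (x*(y*x)) := by
              simp only [mul_assoc]
          _ = (x*y*x) * a * (x*y*x) := by rw [← mul_assoc x y x]
          _ = x*a*x := by rw [hxyx]
      · rintro ⟨hz, hfix⟩
        refine ⟨y * z * y, my_triple A hsq hy hz, ?_⟩
        calc z = (x*y) * z * (y*x) := hfix.symm
          _ = x * (y*z*y) * x := by simp only [mul_assoc]
    rw [hset]
    refine hA.inter ?_
    have hcont : Continuous fun z : H →L[ℂ] H => (x*y) * z * (y*x) :=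
      ((continuous_const.mul continuous_id).mul continuous_const)
    exact isClosed_eq hcont continuous_id
  · intro hS
    -- accretivity of x
    have hacc : ∀ v : H, 0 ≤ Complex.re (inner ℂ (x v) v) := by
      intro v
      have h := hpos.2 v
      rw [ContinuousLinearMap.reApplyInnerSelf] at h
      have he : (inner ℂ (((x + star x) : H →L[ℂ] H) v) v : ℂ)
          = inner ℂ (x v) v + inner ℂ ((star x) v) v := by
        rw [ContinuousLinearMap.add_apply, inner_add_left]
      have hstar : (inner ℂ (((star x) : H →L[ℂ] H) v) v : ℂ) = inner ℂ v (x v) := by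
        rw [ContinuousLinearMap.star_eq_adjoint, ContinuousLinearMap.adjoint_inner_left]
      rw [he, hstar] at h
      have hre : Complex.re ((inner ℂ (x v) v : ℂ) + (inner ℂ v (x v) : ℂ))
          = Complex.re (inner ℂ (x v) v : ℂ) + Complex.re (inner ℂ v (x v) : ℂ) :=
        Complex.add_re _ _
      have hsymm : Complex.re (inner ℂ v (x v) : ℂ) = Complex.re (inner ℂ (x v) v : ℂ) := by
        have := inner_re_symm (𝕜 := ℂ) v (x v)
        simpa [RCLike.re_to_complex] using this
      have h' : 0 ≤ Complex.re ((inner ℂ (x v) v : ℂ) + (inner ℂ v (x v) : ℂ)) := by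
        simpa [RCLike.re_to_complex] using h
      rw [hre, hsymm] at h'
      linarith
    suffices hxS : x ∈ {z : H →L[ℂ] H | ∃ a ∈ A, z = x * a * x} by
      obtain ⟨a, ha, hxa⟩ := hxS
      exact ⟨a, ha, hxa.symm⟩
    rw [← hS.closure_eq]
    apply Metric.mem_closure_iff.mpr
    intro ε hε
    set t : ℝ := ε / 11 with htdef
    have ht : 0 < t := by positivity
    have hu := my_unit x hacc ht
    set B : H →L[ℂ] H := Ring.inverse ((t:ℂ)•1 + x : H →L[ℂ] H) with hBdef
    have hTB : ((t:ℂ)•1 + x : H →L[ℂ] H) * B = 1 := Ring.mul_inverse_cancel _ hu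
    have hBT : B * ((t:ℂ)•1 + x : H →L[ℂ] H) = 1 := Ring.inverse_mul_cancel _ hu
    have hBnorm : ‖B‖ ≤ t⁻¹ := by
      refine ContinuousLinearMap.opNorm_le_bound _ (by positivity) ?_
      intro w
      have h1 : t * ‖B w‖ ≤ ‖(((t:ℂ)•1 + x : H →L[ℂ] H)) (B w)‖ := my_low x hacc ht (B w)
      have h2 : (((t:ℂ)•1 + x : H →L[ℂ] H)) (B w) = w := by
        have h3 : ((((t:ℂ)•1 + x : H →L[ℂ] H)) * B) w = (1 : H →L[ℂ] H) w := by rw [hTB]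
        simpa [ContinuousLinearMap.mul_apply] using h3
      rw [h2] at h1
      calc ‖B w‖ = t⁻¹ * (t * ‖B w‖) := by field_simp
        _ ≤ t⁻¹ * ‖w‖ := mul_le_mul_of_nonneg_left h1 (by positivity)
    have hest := my_est x B ht hTB hBT hBnorm
    refine ⟨x * (x * (B * B)) * x, ⟨x * (B * B), my_mem_all A hA hsq hx hacc ht, rfl⟩, ?_⟩
    rw [dist_eq_norm]
    calc ‖x - x * (x * (B * B)) * x‖ ≤ 10 * t := hest
      _ < ε := by rw [htdef]; linarith
end

section
/- Suppose A and B are closed Jordan subalgebras of unital Jordan operator algebras C and D respectively, with 1_C ∉ A and 1_D ∉ B, and q : A → B is a Jordan homomorphism which is a 1-quotient map (inducing an isometry A/ker(q) → B) such that ker(q) is approximately unital. Then the unique unital linear extension θ : A + ℂ1_C → B + ℂ1_D of q is a 1-quotient map. -/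
set_option synthInstance.maxHeartbeats 1000000
set_option maxHeartbeats 1000000

open scoped ComplexConjugate
open Filter Metric
open scoped ComplexInnerProductSpace

noncomputable section

namespace Stmt16Aux

variable {X : Type*} [NormedRing X] [NormedAlgebra ℂ X]

theorem jmem (S : Submodule ℂ X) (hsq : ∀ a ∈ S, a * a ∈ S) {a b : X}
    (ha : a ∈ S) (hb : b ∈ S) : a * b + b * a ∈ S := by
  have h := hsq (a + b) (S.add_mem ha hb)
  have he : a * b + b * a = (a + b) * (a + b) - a * a - b * b := by noncomm_ring
  rw [he]
  exact S.sub_mem (S.sub_mem h (hsq a ha)) (hsq b hb)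

theorem jmem' (S : Submodule ℂ X) (hsq : ∀ a ∈ S, a * a ∈ S) {a b : X}
    (ha : a ∈ S) (hb : b ∈ S) (hc : a * b = b * a) : a * b ∈ S := by
  have : a * b = (2:ℂ)⁻¹ • (a * b + b * a) := by
    rw [← hc]
    rw [smul_add]
    rw [← smul_add]
    have : a * b + a * b = (2:ℂ) • (a * b) := by
      rw [two_smul]
    rw [this, smul_smul, inv_mul_cancel₀ (two_ne_zero), one_smul]
  rw [this]
  exact S.smul_mem _ (jmem S hsq ha hb)

theorem tsum_mem [CompleteSpace X] (S : Submodule ℂ X) (hSc : IsClosed (S : Set X)) {f : ℕ → X}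
    (hf : Summable f) (h : ∀ n, f n ∈ S) : (∑' n, f n) ∈ S :=
  hSc.mem_of_tendsto hf.hasSum.tendsto_sum_nat
    (Filter.Eventually.of_forall fun N => S.sum_mem fun i _ => h i)

/-- scalar part is dominated by the norm, when `1 ∉ S`. -/
theorem scalar_le_norm (S : Submodule ℂ X) (hSc : IsClosed (S : Set X))
    (hsq : ∀ a ∈ S, a * a ∈ S) (h1 : (1:X) ∉ S) {w : X} (hw : w ∈ S) (ν : ℂ) :
    ‖ν‖ ≤ ‖w + ν • (1:X)‖ := by
  by_contra hcon
  push_neg at hcon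
  have hν0 : ν ≠ 0 := by
    intro h0
    rw [h0] at hcon
    simp at hcon
    exact (norm_nonneg w).not_gt hcon
  set t : X := ν⁻¹ • w with ht
  have htS : t ∈ S := S.smul_mem _ hw
  have hr : ‖1 + t‖ < 1 := by
    have : (1:X) + t = ν⁻¹ • (w + ν • 1) := by
      rw [smul_add, smul_smul, inv_mul_cancel₀ hν0, one_smul, add_comm]
    rw [this, norm_smul, norm_inv]
    rw [inv_mul_lt_iff₀ (norm_pos_iff.mpr hν0), mul_one]
    exact hcon
  -- powers minus one are in S
  have hmem : ∀ n : ℕ, (1 + t) ^ (n+1) - 1 ∈ S := by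
    intro n
    induction n with
    | zero => simpa using htS
    | succ n ih =>
      have hcomm : t * ((1 + t) ^ (n+1) - 1) = ((1 + t) ^ (n+1) - 1) * t := by
        have h1 : Commute t ((1+t)^(n+1)) :=
          (((Commute.one_right t).add_right (Commute.refl t)).pow_right _)
        have h2 : Commute t ((1+t)^(n+1) - 1) := h1.sub_right (Commute.one_right t)
        exact h2.eq
      have he : (1 + t) ^ (n+2) - 1 =
          ((1 + t) ^ (n+1) - 1) + t + ((1 + t) ^ (n+1) - 1) * t := by
        have : (1 + t) ^ (n+2) = (1 + t)^(n+1) * (1 + t) := by rw [pow_succ]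
        rw [this]; noncomm_ring
      rw [he]
      exact S.add_mem (S.add_mem ih htS)
        (jmem' S hsq ih htS hcomm.symm)
  -- 1 is in the closure of S
  have h1c : (1:X) ∈ closure (S : Set X) := by
    rw [Metric.mem_closure_iff]
    intro ε hε
    obtain ⟨n, hn⟩ := exists_pow_lt_of_lt_one hε hr
    refine ⟨(1:X) - (1+t)^(n+1), ?_, ?_⟩
    · have : (1:X) - (1+t)^(n+1) = -((1+t)^(n+1) - 1) := by rw [neg_sub]
      rw [this]
      exact S.neg_mem (hmem n)
    · rw [dist_eq_norm]
      have : (1:X) - ((1:X) - (1+t)^(n+1)) = (1+t)^(n+1) := by rw [sub_sub_cancel]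
      rw [this]
      calc ‖(1+t)^(n+1)‖ ≤ ‖1+t‖^(n+1) := norm_pow_le' _ (Nat.succ_pos n)
        _ ≤ ‖1+t‖^n := pow_le_pow_of_le_one (norm_nonneg _) hr.le (Nat.le_succ n)
        _ < ε := hn
  rw [hSc.closure_eq] at h1c
  exact h1 h1c


def bet (l : ℂ) (n : ℕ) : ℂ := (conj l)^n * (l * conj l - 1)

theorem bet_succ (l : ℂ) (n : ℕ) : bet l (n+1) = conj l * bet l n := by
  simp only [bet, pow_succ]; ring

theorem bet_norm (l : ℂ) (n : ℕ) : ‖bet l n‖ ≤ ‖l‖^n * (‖l‖*‖l‖+1) := by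
  rw [bet, norm_mul, norm_pow, RCLike.norm_conj]
  gcongr
  calc ‖l * conj l - 1‖ ≤ ‖l * conj l‖ + ‖(1:ℂ)‖ := norm_sub_le _ _
    _ = ‖l‖*‖l‖+1 := by rw [norm_mul, RCLike.norm_conj, norm_one]

variable {X : Type*} [NormedRing X] [NormedAlgebra ℂ X]

theorem p_succ (w : X) (ν : ℂ) (n : ℕ) :
    (w + ν•(1:X))^(n+1) - ν^(n+1)•(1:X)
      = w * ((w + ν•1)^n - ν^n•1) + ν^n • w + ν • ((w + ν•1)^n - ν^n•1) := by
  have hx : (w + ν•(1:X))^(n+1) = w * (w+ν•1)^n + ν • (w+ν•1)^n := by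
    rw [pow_succ']
    rw [add_mul, smul_mul_assoc, one_mul]
  rw [hx, mul_sub, mul_smul_comm, mul_one, smul_sub, smul_smul, pow_succ']
  abel

theorem wcomm (w : X) (ν : ℂ) (n : ℕ) :
    w * ((w + ν•(1:X))^n - ν^n•1) = ((w + ν•(1:X))^n - ν^n•1) * w := by
  have h1 : Commute w ((w + ν•(1:X))^n) :=
    ((Commute.refl w).add_right ((Commute.one_right w).smul_right ν)).pow_right _
  exact (h1.sub_right (((Commute.one_right w)).smul_right _)).eq

theorem pmem (S : Submodule ℂ X) (hsq : ∀ a ∈ S, a * a ∈ S) {w : X} (hw : w ∈ S) (ν : ℂ) :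
    ∀ n : ℕ, (w + ν•(1:X))^n - ν^n•(1:X) ∈ S := by
  intro n
  induction n with
  | zero => simp
  | succ n ih =>
    rw [p_succ]
    exact S.add_mem (S.add_mem (jmem' S hsq hw ih (wcomm w ν n)) (S.smul_mem _ hw))
      (S.smul_mem _ ih)

theorem p_norm [NormOneClass X] (w : X) (ν : ℂ) (m : ℕ) (hm : 0 < m) :
    ‖(w + ν•(1:X))^m - ν^m•(1:X)‖ ≤ ‖w + ν•(1:X)‖^m + ‖ν‖^m := by
  refine (norm_sub_le _ _).trans ?_
  gcongr
  · exact norm_pow_le' _ hm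
  · rw [norm_smul, norm_one, mul_one, norm_pow]

theorem summable_geom_aux {r c : ℝ} (h : r < 1) (hr : 0 ≤ r) :
    Summable (fun n : ℕ => c * r^n) :=
  (summable_geometric_of_lt_one hr h).mul_left c

theorem summable_bet_p [CompleteSpace X] [NormOneClass X] (w : X) (ν l : ℂ) (k : ℕ)
    (hx : ‖l‖ * ‖w + ν•(1:X)‖ < 1) (hν : ‖l‖ * ‖ν‖ < 1) :
    Summable (fun n : ℕ => bet l n • ((w + ν•(1:X))^(n+1+k) - ν^(n+1+k)•(1:X))) := by
  set x := w + ν•(1:X) with hxdef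
  have h0x : 0 ≤ ‖l‖ * ‖x‖ := by positivity
  have h0ν : 0 ≤ ‖l‖ * ‖ν‖ := by positivity
  refine Summable.of_norm_bounded
    (g := fun n => (‖l‖*‖l‖+1) * (‖x‖^(1+k) * (‖l‖*‖x‖)^n) + (‖l‖*‖l‖+1) * (‖ν‖^(1+k) * (‖l‖*‖ν‖)^n))
    (((summable_geom_aux hx h0x).mul_left _).add ((summable_geom_aux hν h0ν).mul_left _)) ?_
  intro n
  rw [norm_smul]
  calc ‖bet l n‖ * ‖x^(n+1+k) - ν^(n+1+k)•(1:X)‖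
      ≤ (‖l‖^n * (‖l‖*‖l‖+1)) * (‖x‖^(n+1+k) + ‖ν‖^(n+1+k)) := by
        apply mul_le_mul (bet_norm l n) (p_norm w ν _ (by omega)) (norm_nonneg _) (by positivity)
    _ = (‖l‖*‖l‖+1) * (‖x‖^(1+k) * (‖l‖*‖x‖)^n) + (‖l‖*‖l‖+1) * (‖ν‖^(1+k) * (‖l‖*‖ν‖)^n) := by
        rw [show n+1+k = n+(1+k) from by omega, pow_add, pow_add, mul_pow, mul_pow]
        ring

theorem summable_bet_geom (l ν : ℂ) (hν : ‖l‖ * ‖ν‖ < 1) (k : ℕ) :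
    Summable (fun n : ℕ => bet l n * ν^(n+1+k)) := by
  have h1 : ‖conj l * ν‖ < 1 := by rw [norm_mul, RCLike.norm_conj]; exact hν
  have : (fun n : ℕ => bet l n * ν^(n+1+k)) =
      fun n => ((l*conj l - 1) * ν^(1+k)) * (conj l * ν)^n := by
    funext n
    rw [bet, mul_pow, pow_add]
    ring
  rw [this]
  exact (summable_geometric_of_norm_lt_one h1).mul_left _

theorem bet_geom (l ν : ℂ) (hν : ‖l‖ * ‖ν‖ < 1) (k : ℕ) :
    ∑' n : ℕ, bet l n * ν^(n+1+k) = (l * conj l - 1) * ν^(1+k) * (1 - conj l * ν)⁻¹ := by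
  have h1 : ‖conj l * ν‖ < 1 := by rw [norm_mul, RCLike.norm_conj]; exact hν
  have h2 : (fun n : ℕ => bet l n * ν^(n+1+k)) =
      fun n => ((l*conj l - 1) * ν^(1+k)) * (conj l * ν)^n := by
    funext n
    rw [bet, mul_pow, pow_add]
    ring
  rw [h2, tsum_mul_left, tsum_geometric_of_norm_lt_one h1]

variable {X : Type*} [NormedRing X] [NormedAlgebra ℂ X]

theorem phi_eq [CompleteSpace X] [NormOneClass X] (S : Submodule ℂ X) (hSc : IsClosed (S : Set X))
    (hsq : ∀ a ∈ S, a * a ∈ S) {w : X} (hw : w ∈ S) (ν l : ℂ)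
    (hx : ‖l‖ * ‖w + ν • (1:X)‖ < 1) (hν : ‖l‖ * ‖ν‖ < 1) :
    (∑' n : ℕ, bet l n • ((w + ν•(1:X))^(n+1) - ν^(n+1)•(1:X))) ∈ S ∧
    (l•(1:X) - (w + ν•(1:X))) * Ring.inverse (1 - conj l • (w + ν•(1:X)))
      = ((l - ν) / (1 - conj l * ν)) • (1:X)
        + ∑' n : ℕ, bet l n • ((w + ν•(1:X))^(n+1) - ν^(n+1)•(1:X)) := by
  set x := w + ν•(1:X) with hxdef
  have hDnorm : ‖conj l * ν‖ < 1 := by rw [norm_mul, RCLike.norm_conj]; exact hν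
  have hD : (1 : ℂ) - conj l * ν ≠ 0 := by
    intro h
    rw [sub_eq_zero] at h
    rw [← h] at hDnorm
    simp at hDnorm
  have hu : ‖conj l • x‖ < 1 := by rw [norm_smul, RCLike.norm_conj]; exact hx
  have hU : IsUnit (1 - conj l • x) := isUnit_one_sub_of_norm_lt_one hu
  have S1 : Summable (fun n : ℕ => bet l n • (x^(n+1) - ν^(n+1)•(1:X))) :=
    summable_bet_p w ν l 0 hx hν
  have S2 : Summable (fun n : ℕ => bet l n • (x^(n+2) - ν^(n+2)•(1:X))) :=
    summable_bet_p w ν l 1 hx hν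
  have Sa : Summable (fun n : ℕ => bet l n * ν^(n+2)) := summable_bet_geom l ν hν 1
  have Sb : Summable (fun n : ℕ => bet l n * ν^(n+1)) := summable_bet_geom l ν hν 0
  have Ga : (∑' n : ℕ, bet l n * ν^(n+2)) = (l * conj l - 1) * ν^2 * (1 - conj l * ν)⁻¹ :=
    bet_geom l ν hν 1
  have Gb : (∑' n : ℕ, bet l n * ν^(n+1)) = (l * conj l - 1) * ν^1 * (1 - conj l * ν)⁻¹ :=
    bet_geom l ν hν 0
  have memS : (∑' n : ℕ, bet l n • (x^(n+1) - ν^(n+1)•(1:X))) ∈ S :=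
    tsum_mem S hSc S1 (fun n => S.smul_mem _ (pmem S hsq hw ν (n+1)))
  refine ⟨memS, ?_⟩
  have hTx : (∑' n : ℕ, bet l n • (x^(n+1) - ν^(n+1)•(1:X))) * x
      = (∑' n : ℕ, bet l n • (x^(n+2) - ν^(n+2)•(1:X)))
        + (∑' n : ℕ, bet l n * ν^(n+2)) • (1:X)
        - (∑' n : ℕ, bet l n * ν^(n+1)) • x := by
    rw [← S1.tsum_mul_right x]
    have hint : ∀ n : ℕ, (bet l n • (x^(n+1) - ν^(n+1)•(1:X))) * x
        = (bet l n • (x^(n+2) - ν^(n+2)•(1:X)) + (bet l n * ν^(n+2)) • (1:X))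
          - (bet l n * ν^(n+1)) • x := by
      intro n
      rw [smul_mul_assoc, sub_mul, smul_mul_assoc, one_mul, ← pow_succ]
      have h2 : x^(n+2) - ν^(n+1)•x
          = ((x^(n+2) - ν^(n+2)•(1:X)) + ν^(n+2)•(1:X)) - ν^(n+1)•x := by abel
      rw [h2, smul_sub, smul_add, smul_smul, smul_smul]
    rw [tsum_congr hint, Summable.tsum_sub (S2.add (Sa.smul_const (1:X))) (Sb.smul_const x),
      Summable.tsum_add S2 (Sa.smul_const (1:X)), Summable.tsum_smul_const Sa (1:X), Summable.tsum_smul_const Sb x]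
  have hshift : (∑' n : ℕ, bet l n • (x^(n+1) - ν^(n+1)•(1:X)))
      = bet l 0 • (x^1 - ν^1•(1:X))
        + conj l • (∑' n : ℕ, bet l n • (x^(n+2) - ν^(n+2)•(1:X))) := by
    rw [Summable.tsum_eq_zero_add S1]
    congr 1
    rw [← Summable.tsum_const_smul (conj l) S2]
    exact tsum_congr fun n => by rw [bet_succ, mul_smul]
  have key : (((l - ν) / (1 - conj l * ν)) • (1:X)
        + ∑' n : ℕ, bet l n • (x^(n+1) - ν^(n+1)•(1:X))) * (1 - conj l • x)
      = l•(1:X) - x := by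
    rw [mul_sub, mul_one, mul_smul_comm, add_mul, smul_mul_assoc, one_mul, hTx]
    rw [hshift, Ga, Gb]
    simp only [pow_one]
    have hD' : (1:ℂ) - ν * conj l ≠ 0 := by rw [mul_comm]; exact hD
    match_scalars
    all_goals try simp only [bet, pow_zero, one_mul]
    all_goals try field_simp
    all_goals try ring
  calc (l•(1:X) - x) * Ring.inverse (1 - conj l • x)
      = ((((l - ν) / (1 - conj l * ν)) • (1:X)
          + ∑' n : ℕ, bet l n • (x^(n+1) - ν^(n+1)•(1:X))) * (1 - conj l • x))
        * Ring.inverse (1 - conj l • x) := by rw [key]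
    _ = _ := by rw [mul_assoc, Ring.mul_inverse_cancel _ hU, mul_one]

theorem mobius_invol [CompleteSpace X] (x : X) (l : ℂ) (hu : ‖conj l • x‖ < 1) (hl : ‖l‖ < 1) :
    (l•(1:X) - ((l•(1:X) - x) * Ring.inverse (1 - conj l • x)))
      * Ring.inverse (1 - conj l • ((l•(1:X) - x) * Ring.inverse (1 - conj l • x))) = x := by
  set u : Xˣ := Units.oneSub (conj l • x) hu with hudef
  have hval : (u : X) = 1 - conj l • x := rfl
  have hinv : Ring.inverse (1 - conj l • x) = ((u⁻¹ : Xˣ) : X) := by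
    rw [← hval, Ring.inverse_unit]
  set G := (l•(1:X) - x) * Ring.inverse (1 - conj l • x) with hG
  have hδ : (1 : ℂ) - l * conj l ≠ 0 := by
    intro h
    rw [sub_eq_zero] at h
    have h2 : ‖l * conj l‖ < 1 := by
      rw [norm_mul, RCLike.norm_conj]
      nlinarith [norm_nonneg l]
    rw [← h] at h2
    simp at h2
  have hGu : G * (u : X) = l•(1:X) - x := by
    rw [hG, hinv, mul_assoc, Units.inv_mul, mul_one]
  have hlu : (l•(1:X) - G) * (u:X) = (1 - l * conj l) • x := by
    rw [sub_mul, hGu, smul_mul_assoc, one_mul, hval, smul_sub, smul_smul]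
    match_scalars <;> ring
  have h2 : (1 - conj l • G) * (u:X) = (1 - l*conj l) • (1:X) := by
    rw [sub_mul, one_mul, smul_mul_assoc, hGu, hval, smul_sub, smul_smul]
    match_scalars <;> ring
  have hcomm_xu : Commute x (u:X) := by
    rw [hval]
    exact (Commute.one_right x).sub_right ((Commute.refl x).smul_right _)
  have hcomm_G_u : Commute G (u:X) := by
    rw [hG, hinv]
    exact Commute.mul_left
      (Commute.sub_left ((Commute.one_left (u:X)).smul_left l) hcomm_xu)
      ((Commute.refl (u:X)).units_inv_left)
  have hcu : Commute (1 - conj l • G) (u:X) :=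
    Commute.sub_left (Commute.one_left (u:X)) (hcomm_G_u.smul_left _)
  set w : X := (1 - l*conj l)⁻¹ • (u:X) with hw
  have hwu1 : (1 - conj l • G) * w = 1 := by
    rw [hw, mul_smul_comm, h2, smul_smul, inv_mul_cancel₀ hδ, one_smul]
  have hwu2 : w * (1 - conj l • G) = 1 := by
    rw [hw, smul_mul_assoc, ← hcu.eq, h2, smul_smul, inv_mul_cancel₀ hδ, one_smul]
  have hRinv : Ring.inverse (1 - conj l • G) = w := by
    have : (1 - conj l • G) = ((⟨1 - conj l • G, w, hwu1, hwu2⟩ : Xˣ) : X) := rfl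
    rw [this, Ring.inverse_unit]
    rfl
  rw [hRinv, hw, mul_smul_comm, hlu, smul_smul, inv_mul_cancel₀ hδ, one_smul]

theorem mobius_norm {V : Type*} [NormedAddCommGroup V] [InnerProductSpace ℂ V] [CompleteSpace V]
    (x : V →L[ℂ] V) (l : ℂ) (R : ℝ) (hxR : ‖x‖ ≤ R) (hR1 : R ≤ 1) (hl : ‖l‖ < 1) :
    ‖(l • (1 : V →L[ℂ] V) - x) * Ring.inverse (1 - conj l • x)‖
      ≤ (‖l‖ + R) / (1 + ‖l‖ * R) := by
  have hR0 : 0 ≤ R := le_trans (norm_nonneg x) hxR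
  have hlR : ‖conj l • x‖ < 1 := by
    rw [norm_smul, RCLike.norm_conj]
    calc ‖l‖ * ‖x‖ ≤ ‖l‖ * R := mul_le_mul_of_nonneg_left hxR (norm_nonneg l)
      _ ≤ ‖l‖ * 1 := mul_le_mul_of_nonneg_left hR1 (norm_nonneg l)
      _ < 1 := by rwa [mul_one]
  have hU : IsUnit (1 - conj l • x) := isUnit_one_sub_of_norm_lt_one hlR
  have hd : (0:ℝ) < 1 + ‖l‖ * R := by positivity
  apply ContinuousLinearMap.opNorm_le_bound _ (by positivity)
  intro v
  set u := Ring.inverse (1 - conj l • x) v with hu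
  have hv : (1 - conj l • x) u = v := by
    have h1 : ((1 - conj l • x) * Ring.inverse (1 - conj l • x)) v = v := by
      rw [Ring.mul_inverse_cancel _ hU, ContinuousLinearMap.one_apply]
    rw [ContinuousLinearMap.mul_apply] at h1
    exact h1
  have happ : ((l • (1:V→L[ℂ]V) - x) * Ring.inverse (1 - conj l • x)) v
      = l • u - x u := by
    rw [ContinuousLinearMap.mul_apply, ← hu, ContinuousLinearMap.sub_apply,
      ContinuousLinearMap.smul_apply, ContinuousLinearMap.one_apply]
  rw [happ, ← hv]
  have hbu : (1 - conj l • x) u = u - conj l • (x u) := by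
    rw [ContinuousLinearMap.sub_apply, ContinuousLinearMap.one_apply,
      ContinuousLinearMap.smul_apply]
  rw [hbu]
  have hQ : ‖x u‖ ≤ R * ‖u‖ :=
    le_trans (x.le_opNorm u) (mul_le_mul_of_nonneg_right hxR (norm_nonneg u))
  have hA := norm_sub_sq (𝕜 := ℂ) (l • u) (x u)
  have hB := norm_sub_sq (𝕜 := ℂ) u (conj l • (x u))
  have e1 : ⟪l • u, x u⟫ = conj l * ⟪u, x u⟫ := by rw [inner_smul_left]
  have e2 : ⟪u, conj l • (x u)⟫ = conj l * ⟪u, x u⟫ := by rw [inner_smul_right]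
  rw [e1] at hA
  rw [e2] at hB
  rw [norm_smul] at hA hB
  rw [RCLike.norm_conj] at hB
  have hW : ‖l • u - x u‖^2
      = ‖u - conj l • (x u)‖^2 - (1-‖l‖^2)*(‖u‖^2 - ‖x u‖^2) := by
    rw [hA, hB]; ring
  have hbP : ‖u - conj l • (x u)‖ ≤ (1 + ‖l‖ * R) * ‖u‖ := by
    calc ‖u - conj l • (x u)‖ ≤ ‖u‖ + ‖conj l • (x u)‖ := norm_sub_le _ _
      _ = ‖u‖ + ‖l‖ * ‖x u‖ := by rw [norm_smul, RCLike.norm_conj]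
      _ ≤ ‖u‖ + ‖l‖ * (R * ‖u‖) := by
          have := mul_le_mul_of_nonneg_left hQ (norm_nonneg l)
          linarith
      _ = (1 + ‖l‖ * R) * ‖u‖ := by ring
  -- conclude via squares
  have hc1 : ‖x u‖^2 ≤ R^2 * ‖u‖^2 := by nlinarith [hQ, norm_nonneg (x u), norm_nonneg u]
  have hc3 : ‖u - conj l • (x u)‖^2 ≤ (1 + ‖l‖*R)^2 * ‖u‖^2 := by
    nlinarith [hbP, norm_nonneg (u - conj l • (x u))]
  have hL1 : (0:ℝ) ≤ 1 - ‖l‖^2 := by nlinarith [norm_nonneg l]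
  have hR2 : (0:ℝ) ≤ 1 - R^2 := by nlinarith
  have hkey : ‖l • u - x u‖^2 * (1 + ‖l‖*R)^2
      ≤ (‖l‖ + R)^2 * ‖u - conj l • (x u)‖^2 := by
    rw [hW]
    nlinarith [mul_nonneg hL1 hR2, mul_nonneg (mul_nonneg hL1 hR2) (sq_nonneg ‖u‖),
      mul_nonneg hL1 (sq_nonneg (1 + ‖l‖*R)),
      mul_le_mul_of_nonneg_left hc1 (mul_nonneg hL1 (sq_nonneg (1+‖l‖*R))),
      mul_le_mul_of_nonneg_left hc3 (mul_nonneg hL1 hR2)]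
  have h1 : ‖l • u - x u‖ * (1 + ‖l‖*R) ≤ (‖l‖ + R) * ‖u - conj l • (x u)‖ := by
    have h2 : (‖l • u - x u‖ * (1 + ‖l‖*R))^2
        ≤ ((‖l‖ + R) * ‖u - conj l • (x u)‖)^2 := by
      rw [mul_pow, mul_pow]
      exact hkey
    have h3 := Real.sqrt_le_sqrt h2
    rwa [Real.sqrt_sq (by positivity), Real.sqrt_sq (by positivity)] at h3
  rw [div_mul_eq_mul_div, le_div_iff₀ hd]
  linarith [h1]

section Transfer

variable {Y : Type*} [NormedRing Y] [NormedAlgebra ℂ Y]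

theorem half_comm {a b : X} (h : a * b = b * a) : a * b = (2:ℂ)⁻¹ • (a * b + b * a) := by
  rw [← h, ← two_smul ℂ (a*b), smul_smul, inv_mul_cancel₀ (two_ne_zero), one_smul]

/-- transfer of Jordan products along `q`. -/
theorem jtrans (S : Submodule ℂ X) (T : Submodule ℂ Y)
    (hsqS : ∀ a ∈ S, a * a ∈ S)
    (q : ↥S →L[ℂ] ↥T)
    (hqJ : ∀ (a : ↥S) (h : (a:X)*(a:X) ∈ S),
      ((q ⟨(a:X)*(a:X), h⟩ : ↥T) : Y) = (q a : Y) * (q a : Y))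
    (a b : ↥S) (h : (a:X)*(b:X) + (b:X)*(a:X) ∈ S) :
    ((q ⟨(a:X)*(b:X) + (b:X)*(a:X), h⟩ : ↥T) : Y)
      = (q a : Y) * (q b : Y) + (q b : Y) * (q a : Y) := by
  have hco : ((a+b : ↥S) : X) = (a:X)+(b:X) := rfl
  have hmem : ((a+b : ↥S):X) * ((a+b : ↥S):X) ∈ S := hsqS _ (a+b).2
  have h1 := hqJ (a+b) hmem
  have hsplit : (⟨((a+b : ↥S):X) * ((a+b : ↥S):X), hmem⟩ : ↥S)
      = ⟨(a:X)*(a:X), hsqS _ a.2⟩ + ⟨(a:X)*(b:X)+(b:X)*(a:X), h⟩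
        + ⟨(b:X)*(b:X), hsqS _ b.2⟩ := by
    apply Subtype.ext
    push_cast
    noncomm_ring
  rw [hsplit] at h1
  rw [map_add, map_add] at h1
  push_cast at h1
  rw [hqJ a (hsqS _ a.2), hqJ b (hsqS _ b.2)] at h1
  rw [map_add] at h1
  push_cast at h1
  have h2 : ((q a : Y) + (q b : Y)) * ((q a : Y) + (q b : Y))
      = (q a : Y) * (q a : Y) + ((q a : Y) * (q b : Y) + (q b : Y) * (q a : Y))
        + (q b : Y) * (q b : Y) := by noncomm_ring
  rw [h2] at h1
  have h3 := add_right_cancel h1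
  exact add_left_cancel h3

theorem powmem (S : Submodule ℂ X) (hsq : ∀ a ∈ S, a * a ∈ S) {w : X} (hw : w ∈ S) :
    ∀ n : ℕ, w^(n+1) ∈ S := by
  intro n
  induction n with
  | zero => simpa using hw
  | succ n ih =>
    have hc : w * w^(n+1) = w^(n+1) * w := (Commute.refl w).pow_right (n+1) |>.eq
    have : w^(n+2) = w * w^(n+1) := (pow_succ' w (n+1))
    rw [this]
    exact jmem' S hsq hw ih hc

/-- transfer of `pA n = x^n - ν^n • 1` along `q`. -/
theorem ptrans (S : Submodule ℂ X) (T : Submodule ℂ Y)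
    (hsqS : ∀ a ∈ S, a * a ∈ S)
    (q : ↥S →L[ℂ] ↥T)
    (hqJ : ∀ (a : ↥S) (h : (a:X)*(a:X) ∈ S),
      ((q ⟨(a:X)*(a:X), h⟩ : ↥T) : Y) = (q a : Y) * (q a : Y))
    (c : ↥S) (ν : ℂ) :
    ∀ (n : ℕ) (h : ((c:X) + ν•(1:X))^n - ν^n•(1:X) ∈ S),
      ((q ⟨((c:X) + ν•(1:X))^n - ν^n•(1:X), h⟩ : ↥T) : Y)
        = ((q c : Y) + ν•(1:Y))^n - ν^n•(1:Y) := by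
  intro n
  induction n with
  | zero =>
    intro h
    have h0 : (⟨((c:X) + ν•(1:X))^0 - ν^0•(1:X), h⟩ : ↥S) = 0 := by
      apply Subtype.ext; simp
    rw [h0, map_zero]
    simp
  | succ n ih =>
    intro h
    have hpmem : ((c:X) + ν•(1:X))^n - ν^n•(1:X) ∈ S := pmem S hsqS c.2 ν n
    have hjm : (c:X) * (((c:X) + ν•(1:X))^n - ν^n•(1:X))
        + (((c:X) + ν•(1:X))^n - ν^n•(1:X)) * (c:X) ∈ S :=
      jmem S hsqS c.2 hpmem
    have hsplit : (⟨((c:X) + ν•(1:X))^(n+1) - ν^(n+1)•(1:X), h⟩ : ↥S)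
        = (2:ℂ)⁻¹ • ⟨_, hjm⟩ + ν^n • c + ν • ⟨_, hpmem⟩ := by
      apply Subtype.ext
      push_cast
      conv_lhs => rw [p_succ (c:X) ν n, half_comm (wcomm (c:X) ν n)]
    rw [hsplit, map_add, map_add, map_smul, map_smul, map_smul]
    push_cast
    rw [jtrans S T hsqS q hqJ c ⟨_, hpmem⟩ hjm]
    have hih : ((q ⟨((c:X) + ν•(1:X))^n - ν^n•(1:X), hpmem⟩ : ↥T) : Y)
        = ((q c : Y) + ν•(1:Y))^n - ν^n•(1:Y) := ih hpmem
    rw [hih]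
    conv_rhs => rw [p_succ (q c : Y) ν n, half_comm (wcomm (q c : Y) ν n)]

theorem summable_bet_smul [CompleteSpace Y] {l : ℂ} {a b : ℝ} (h0a : 0 ≤ a) (h0b : 0 ≤ b)
    (hla : ‖l‖ * a < 1) (hlb : ‖l‖ * b < 1) {g : ℕ → Y}
    (hg : ∀ n, ‖g n‖ ≤ a^(n+1) + b^(n+1)) :
    Summable (fun n : ℕ => bet l n • g n) := by
  have h0la : 0 ≤ ‖l‖ * a := by positivity
  have h0lb : 0 ≤ ‖l‖ * b := by positivity
  refine Summable.of_norm_bounded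
    (g := fun n => (‖l‖*‖l‖+1) * (a * (‖l‖*a)^n) + (‖l‖*‖l‖+1) * (b * (‖l‖*b)^n))
    (((summable_geom_aux hla h0la).mul_left _).add ((summable_geom_aux hlb h0lb).mul_left _)) ?_
  intro n
  rw [norm_smul]
  calc ‖bet l n‖ * ‖g n‖
      ≤ (‖l‖^n * (‖l‖*‖l‖+1)) * (a^(n+1) + b^(n+1)) := by
        apply mul_le_mul (bet_norm l n) (hg n) (norm_nonneg _) (by positivity)
    _ = (‖l‖*‖l‖+1) * (a * (‖l‖*a)^n) + (‖l‖*‖l‖+1) * (b * (‖l‖*b)^n) := by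
        rw [pow_succ, pow_succ, mul_pow, mul_pow]
        ring

/-- transfer of the tsum along `q`. -/
theorem tsum_trans [CompleteSpace X] [CompleteSpace Y] [NormOneClass X] (S : Submodule ℂ X) (T : Submodule ℂ Y)
    (hScl : IsClosed (S : Set X)) (hTcl : IsClosed (T : Set Y))
    (hsqS : ∀ a ∈ S, a * a ∈ S) (hsqT : ∀ a ∈ T, a * a ∈ T)
    (q : ↥S →L[ℂ] ↥T)
    (hqJ : ∀ (a : ↥S) (h : (a:X)*(a:X) ∈ S),
      ((q ⟨(a:X)*(a:X), h⟩ : ↥T) : Y) = (q a : Y) * (q a : Y))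
    (hqc : ∀ a : ↥S, ‖q a‖ ≤ ‖a‖)
    (c : ↥S) (ν l : ℂ)
    (hx : ‖l‖ * ‖(c:X) + ν•(1:X)‖ < 1) (hν : ‖l‖ * ‖ν‖ < 1) :
    ∃ (hmA : (∑' n : ℕ, bet l n • (((c:X) + ν•(1:X))^(n+1) - ν^(n+1)•(1:X))) ∈ S)
      (hmB : (∑' n : ℕ, bet l n • (((q c : Y) + ν•(1:Y))^(n+1) - ν^(n+1)•(1:Y))) ∈ T),
      q ⟨_, hmA⟩ = ⟨_, hmB⟩ := by
  have SA : Summable (fun n : ℕ => bet l n • (((c:X) + ν•(1:X))^(n+1) - ν^(n+1)•(1:X))) :=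
    summable_bet_p (c:X) ν l 0 hx hν
  have hpBle : ∀ n : ℕ, ‖((q c : Y) + ν•(1:Y))^(n+1) - ν^(n+1)•(1:Y)‖
      ≤ ‖(c:X) + ν•(1:X)‖^(n+1) + ‖ν‖^(n+1) := by
    intro n
    have hA := ptrans S T hsqS q hqJ c ν (n+1) (pmem S hsqS c.2 ν (n+1))
    rw [← hA]
    calc ‖((q ⟨_, pmem S hsqS c.2 ν (n+1)⟩ : ↥T) : Y)‖
        = ‖q (⟨((c:X) + ν•(1:X))^(n+1) - ν^(n+1)•(1:X), pmem S hsqS c.2 ν (n+1)⟩ : ↥S)‖ := rfl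
      _ ≤ ‖(⟨((c:X) + ν•(1:X))^(n+1) - ν^(n+1)•(1:X), pmem S hsqS c.2 ν (n+1)⟩ : ↥S)‖ := hqc _
      _ = ‖((c:X) + ν•(1:X))^(n+1) - ν^(n+1)•(1:X)‖ := rfl
      _ ≤ ‖(c:X) + ν•(1:X)‖^(n+1) + ‖ν‖^(n+1) := p_norm _ ν (n+1) (Nat.succ_pos n)
  have SB : Summable (fun n : ℕ => bet l n • (((q c : Y) + ν•(1:Y))^(n+1) - ν^(n+1)•(1:Y))) :=
    summable_bet_smul (norm_nonneg _) (norm_nonneg _) hx hν hpBle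
  have hmA : (∑' n : ℕ, bet l n • (((c:X) + ν•(1:X))^(n+1) - ν^(n+1)•(1:X))) ∈ S :=
    tsum_mem S hScl SA (fun n => S.smul_mem _ (pmem S hsqS c.2 ν (n+1)))
  have hmB : (∑' n : ℕ, bet l n • (((q c : Y) + ν•(1:Y))^(n+1) - ν^(n+1)•(1:Y))) ∈ T :=
    tsum_mem T hTcl SB (fun n => T.smul_mem _ (pmem T hsqT (q c).2 ν (n+1)))
  refine ⟨hmA, hmB, ?_⟩
  apply Subtype.ext
  -- partial sums in the subtype
  set FA : ℕ → ↥S := fun n => bet l n • (⟨_, pmem S hsqS c.2 ν (n+1)⟩ : ↥S) with hFA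
  have hcoeFA : ∀ N : ℕ, ((∑ n ∈ Finset.range N, FA n : ↥S) : X)
      = ∑ n ∈ Finset.range N, bet l n • (((c:X) + ν•(1:X))^(n+1) - ν^(n+1)•(1:X)) := by
    intro N
    push_cast
    rfl
  have htendA : Filter.Tendsto (fun N => ∑ n ∈ Finset.range N, FA n) atTop
      (nhds (⟨_, hmA⟩ : ↥S)) := by
    rw [tendsto_subtype_rng]
    have := SA.hasSum.tendsto_sum_nat
    convert this using 1
    funext N
    exact hcoeFA N
  have htendB : Filter.Tendsto (fun N => ((q (∑ n ∈ Finset.range N, FA n) : ↥T) : Y)) atTop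
      (nhds ((q ⟨_, hmA⟩ : ↥T) : Y)) := by
    apply Filter.Tendsto.comp (continuous_subtype_val.tendsto _)
    exact Filter.Tendsto.comp (q.continuous.tendsto _) htendA
  have hqFA : ∀ N : ℕ, ((q (∑ n ∈ Finset.range N, FA n) : ↥T) : Y)
      = ∑ n ∈ Finset.range N, bet l n • (((q c : Y) + ν•(1:Y))^(n+1) - ν^(n+1)•(1:Y)) := by
    intro N
    rw [map_sum]
    push_cast
    congr 1
    funext n
    rw [hFA]
    rw [map_smul]
    push_cast
    rw [ptrans S T hsqS q hqJ c ν (n+1) (pmem S hsqS c.2 ν (n+1))]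
  rw [funext hqFA] at htendB
  exact tendsto_nhds_unique htendB SB.hasSum.tendsto_sum_nat

end Transfer

section Meyer

variable {H K : Type*}
    [NormedAddCommGroup H] [InnerProductSpace ℂ H] [CompleteSpace H]
    [NormedAddCommGroup K] [InnerProductSpace ℂ K] [CompleteSpace K]

theorem div_lt_one_aux {L R : ℝ} (h0L : 0 ≤ L) (h0R : 0 ≤ R) (hL : L < 1) (hR : R < 1) :
    (L + R) / (1 + L * R) < 1 := by
  rw [div_lt_one (by positivity)]
  nlinarith

theorem div_le_one_aux {L R : ℝ} (h0L : 0 ≤ L) (h0R : 0 ≤ R) (hL : L < 1) (hR : R ≤ 1) :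
    (L + R) / (1 + L * R) ≤ 1 := by
  rw [div_le_one (by positivity)]
  nlinarith

/-- Meyer's theorem, contractive direction: a contractive Jordan homomorphism
extends contractively to the unitization. -/
theorem meyer_le [Nontrivial H] [Nontrivial K]
    (A : Submodule ℂ (H →L[ℂ] H)) (hA : IsClosed (A : Set (H →L[ℂ] H)))
    (hsqA : ∀ a ∈ A, a * a ∈ A) (h1A : (1 : H →L[ℂ] H) ∉ A)
    (B : Submodule ℂ (K →L[ℂ] K)) (hB : IsClosed (B : Set (K →L[ℂ] K)))
    (hsqB : ∀ b ∈ B, b * b ∈ B)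
    (q : ↥A →L[ℂ] ↥B)
    (hqJ : ∀ (a : ↥A) (h : (a : H →L[ℂ] H)*(a : H →L[ℂ] H) ∈ A),
      ((q ⟨(a : H →L[ℂ] H)*(a : H →L[ℂ] H), h⟩ : ↥B) : K →L[ℂ] K)
        = (q a : K →L[ℂ] K) * (q a : K →L[ℂ] K))
    (hqc : ∀ a : ↥A, ‖q a‖ ≤ ‖a‖)
    (c : ↥A) (μ : ℂ) :
    ‖((q c : ↥B) : K →L[ℂ] K) + μ • 1‖ ≤ ‖(c : H →L[ℂ] H) + μ • 1‖ := by
  refine le_of_forall_pos_le_add ?_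
  intro ε hε
  set E := H →L[ℂ] H
  set F := K →L[ℂ] K
  set t := ‖(c : E) + μ • 1‖ with htdef
  have ht0 : 0 ≤ t := norm_nonneg _
  set T : ℝ := t + ε with hTdef
  have hT0 : 0 < T := by positivity
  have hTne : (T:ℂ) ≠ 0 := by
    simp only [ne_eq, Complex.ofReal_eq_zero]
    exact ne_of_gt hT0
  set ν : ℂ := μ / (T:ℂ) with hνdef
  set c₁ : ↥A := ((T:ℂ))⁻¹ • c with hc₁def
  have hc₁coe : (c₁ : E) = ((T:ℂ))⁻¹ • (c : E) := rfl
  have hxval : (c₁ : E) + ν • 1 = ((T:ℂ))⁻¹ • ((c : E) + μ • 1) := by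
    rw [hc₁coe, hνdef, smul_add, smul_smul, div_eq_inv_mul]
  have hTnorm : ‖((T:ℂ))⁻¹‖ = T⁻¹ := by
    rw [norm_inv, Complex.norm_real, Real.norm_of_nonneg hT0.le]
  have hx1 : ‖(c₁ : E) + ν • 1‖ < 1 := by
    rw [hxval, norm_smul, hTnorm, ← htdef]
    rw [inv_mul_lt_iff₀ hT0, mul_one]
    linarith
  have hν1 : ‖ν‖ < 1 :=
    lt_of_le_of_lt (scalar_le_norm A hA hsqA h1A c₁.2 ν) hx1
  have hxprod : ‖ν‖ * ‖(c₁ : E) + ν • 1‖ < 1 := by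
    nlinarith [norm_nonneg ν, norm_nonneg ((c₁ : E) + ν • 1)]
  have hνprod : ‖ν‖ * ‖ν‖ < 1 := by nlinarith [norm_nonneg ν]
  -- first application of phi_eq on the A side
  obtain ⟨hmA, hphiA⟩ := phi_eq A hA hsqA c₁.2 ν ν hxprod hνprod
  rw [sub_self, zero_div, zero_smul, zero_add] at hphiA
  -- the A-side Möbius transform lands in A with small norm
  have hmAnorm : ‖∑' n : ℕ, bet ν n • (((c₁:E) + ν•(1:E))^(n+1) - ν^(n+1)•(1:E))‖
      ≤ (‖ν‖ + ‖(c₁ : E) + ν • 1‖) / (1 + ‖ν‖ * ‖(c₁ : E) + ν • 1‖) := by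
    rw [← hphiA]
    exact mobius_norm _ ν _ le_rfl hx1.le hν1
  set K₁ : ℝ := (‖ν‖ + ‖(c₁ : E) + ν • 1‖) / (1 + ‖ν‖ * ‖(c₁ : E) + ν • 1‖) with hK₁def
  have hK₁lt : K₁ < 1 := div_lt_one_aux (norm_nonneg _) (norm_nonneg _) hν1 hx1
  have hK₁0 : 0 ≤ K₁ := by positivity
  -- transfer the Möbius transform
  obtain ⟨hmA', hmB', heq⟩ := tsum_trans A B hA hB hsqA hsqB q hqJ hqc c₁ ν ν hxprod hνprod
  set mA : E := ∑' n : ℕ, bet ν n • (((c₁:E) + ν•(1:E))^(n+1) - ν^(n+1)•(1:E)) with hmAdef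
  set mB : F := ∑' n : ℕ, bet ν n • (((q c₁ : F) + ν•(1:F))^(n+1) - ν^(n+1)•(1:F)) with hmBdef
  have hmBnorm : ‖mB‖ ≤ K₁ := by
    have h1 : ‖mB‖ = ‖q (⟨mA, hmA'⟩ : ↥A)‖ := by rw [heq]; rfl
    rw [h1]
    exact le_trans (hqc _) hmAnorm
  -- second application of phi_eq on the A side, at mA
  have hx2 : ‖ν‖ * ‖mA + (0:ℂ) • (1:E)‖ < 1 := by
    have h0 : mA + (0:ℂ) • (1:E) = mA := by simp
    rw [h0]
    have : ‖mA‖ ≤ K₁ := hmAnorm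
    nlinarith [norm_nonneg ν, norm_nonneg mA]
  have hν2 : ‖ν‖ * ‖(0:ℂ)‖ < 1 := by simp
  obtain ⟨hm2A, hphiA2⟩ := phi_eq A hA hsqA hmA' 0 ν hx2 hν2
  rw [sub_zero, mul_zero, sub_zero, div_one] at hphiA2
  obtain ⟨hm2A', hm2B', heq2⟩ := tsum_trans A B hA hB hsqA hsqB q hqJ hqc ⟨mA, hmA'⟩ 0 ν hx2 hν2
  -- involution: phi_ν (mA) = x
  have hu : ‖conj ν • ((c₁:E) + ν • 1)‖ < 1 := by
    rw [norm_smul, RCLike.norm_conj]; exact hxprod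
  have hinvol := mobius_invol ((c₁:E) + ν • 1) ν hu hν1
  rw [hphiA] at hinvol
  -- so the second A-side tsum equals c₁
  have hm2A_eq : (∑' n : ℕ, bet ν n • ((mA + (0:ℂ)•(1:E))^(n+1) - (0:ℂ)^(n+1)•(1:E)))
      = (c₁ : E) := by
    have hm0 : mA + (0:ℂ)•(1:E) = mA := by simp
    have h5 : (ν • (1:E)) + (∑' n : ℕ, bet ν n • ((mA + (0:ℂ)•(1:E))^(n+1) - (0:ℂ)^(n+1)•(1:E)))
        = (c₁:E) + ν • 1 := by
      calc (ν • (1:E)) + (∑' n : ℕ, bet ν n • ((mA + (0:ℂ)•(1:E))^(n+1) - (0:ℂ)^(n+1)•(1:E)))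
          = (ν•(1:E) - (mA + (0:ℂ)•(1:E)))
            * Ring.inverse (1 - conj ν•(mA + (0:ℂ)•(1:E))) := hphiA2.symm
        _ = (ν•(1:E) - mA) * Ring.inverse (1 - conj ν • mA) := by rw [hm0]
        _ = (c₁:E) + ν • 1 := hinvol
    have h6 := congrArg (fun z => z - ν • (1:E)) h5
    simpa using h6
  -- q of second tsum equals q c₁
  have hq2 : (q (⟨_, hm2A'⟩ : ↥A) : ↥B) = q c₁ := by
    congr 1
    exact Subtype.ext hm2A_eq
  -- hence the B-side second tsum is (q c₁ : F)
  have hm2B_eq : (∑' n : ℕ, bet ν n •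
      (((q (⟨mA, hmA'⟩ : ↥A) : F) + (0:ℂ)•(1:F))^(n+1) - (0:ℂ)^(n+1)•(1:F))) = (q c₁ : F) := by
    have := congrArg (Subtype.val) heq2
    rw [hq2] at this
    exact this.symm
  -- B-side phi_eq at mB
  have hx3 : ‖ν‖ * ‖mB + (0:ℂ) • (1:F)‖ < 1 := by
    have h0 : mB + (0:ℂ) • (1:F) = mB := by simp
    rw [h0]
    nlinarith [norm_nonneg ν, norm_nonneg mB]
  obtain ⟨hm3B, hphiB2⟩ := phi_eq B hB hsqB hmB' 0 ν hx3 hν2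
  rw [sub_zero, mul_zero, sub_zero, div_one] at hphiB2
  -- identify the B-side tsum at mB with the one at (q ⟨mA⟩)
  have hcoe : (q (⟨mA, hmA'⟩ : ↥A) : F) = mB := congrArg Subtype.val heq
  rw [hcoe] at hm2B_eq
  rw [hm2B_eq] at hphiB2
  -- so phi_ν(mB) = ν•1 + (q c₁ : F), with norm at most 1
  have hynorm : ‖ν • (1:F) + (q c₁ : F)‖ ≤ 1 := by
    rw [← hphiB2]
    refine le_trans (mobius_norm _ ν K₁ ?_ hK₁lt.le hν1) ?_
    · have h0 : mB + (0:ℂ) • (1:F) = mB := by simp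
      rw [h0]; exact hmBnorm
    · exact div_le_one_aux (norm_nonneg _) hK₁0 hν1 hK₁lt.le
  -- rescale
  have hqc₁ : (q c₁ : F) = ((T:ℂ))⁻¹ • (q c : F) := by
    rw [hc₁def, map_smul]
    rfl
  have hscale : ((q c : ↥B) : F) + μ • 1 = (T:ℂ) • (ν • (1:F) + (q c₁ : F)) := by
    rw [hqc₁, hνdef, smul_add, smul_smul, smul_smul, mul_div_cancel₀ _ hTne,
      mul_inv_cancel₀ hTne, one_smul, add_comm]
  rw [hscale, norm_smul]
  have hTn : ‖((T:ℝ):ℂ)‖ = T := by rw [Complex.norm_real, Real.norm_of_nonneg hT0.le]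
  rw [hTn]
  calc T * ‖ν • (1:F) + (q c₁ : F)‖ ≤ T * 1 := by
        exact mul_le_mul_of_nonneg_left hynorm hT0.le
    _ = t + ε := by rw [mul_one]

end Meyer

section Meyer2

variable {H K : Type*}
    [NormedAddCommGroup H] [InnerProductSpace ℂ H] [CompleteSpace H]
    [NormedAddCommGroup K] [InnerProductSpace ℂ K] [CompleteSpace K]

/-- Meyer's theorem, quotient direction: elements of the unitization can be lifted
with almost the same norm. -/
theorem meyer_ge [Nontrivial H] [Nontrivial K]
    (A : Submodule ℂ (H →L[ℂ] H)) (hA : IsClosed (A : Set (H →L[ℂ] H)))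
    (hsqA : ∀ a ∈ A, a * a ∈ A)
    (B : Submodule ℂ (K →L[ℂ] K)) (hB : IsClosed (B : Set (K →L[ℂ] K)))
    (hsqB : ∀ b ∈ B, b * b ∈ B) (h1B : (1 : K →L[ℂ] K) ∉ B)
    (q : ↥A →L[ℂ] ↥B)
    (hqJ : ∀ (a : ↥A) (h : (a : H →L[ℂ] H)*(a : H →L[ℂ] H) ∈ A),
      ((q ⟨(a : H →L[ℂ] H)*(a : H →L[ℂ] H), h⟩ : ↥B) : K →L[ℂ] K)
        = (q a : K →L[ℂ] K) * (q a : K →L[ℂ] K))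
    (hqc : ∀ a : ↥A, ‖q a‖ ≤ ‖a‖)
    (hqsurj : Function.Surjective q)
    (hqquot : ∀ a : ↥A, ‖q a‖ = Metric.infDist a {k : ↥A | q k = 0})
    (a : ↥A) (μ : ℂ) (ε : ℝ) (hε : 0 < ε) :
    ∃ k : ↥A, q k = 0 ∧
      ‖((a : H →L[ℂ] H) + μ • 1) - (k : H →L[ℂ] H)‖
        ≤ ‖((q a : ↥B) : K →L[ℂ] K) + μ • 1‖ + ε := by
  set E := H →L[ℂ] H
  set F := K →L[ℂ] K
  set s₀ := ‖((q a : ↥B) : F) + μ • 1‖ with hs₀def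
  have hs₀0 : 0 ≤ s₀ := norm_nonneg _
  set T : ℝ := s₀ + ε with hTdef
  have hT0 : 0 < T := by positivity
  have hTne : (T:ℂ) ≠ 0 := by
    simp only [ne_eq, Complex.ofReal_eq_zero]
    exact ne_of_gt hT0
  have hTnorm : ‖((T:ℂ))⁻¹‖ = T⁻¹ := by
    rw [norm_inv, Complex.norm_real, Real.norm_of_nonneg hT0.le]
  set ν : ℂ := μ / (T:ℂ) with hνdef
  set a₁ : ↥A := ((T:ℂ))⁻¹ • a with ha₁def
  have hqa₁ : (q a₁ : F) = ((T:ℂ))⁻¹ • (q a : F) := by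
    rw [ha₁def, map_smul]; rfl
  have hyval : (q a₁ : F) + ν • 1 = ((T:ℂ))⁻¹ • ((q a : F) + μ • 1) := by
    rw [hqa₁, hνdef, smul_add, smul_smul, div_eq_inv_mul]
  have hy1 : ‖(q a₁ : F) + ν • 1‖ < 1 := by
    rw [hyval, norm_smul, hTnorm, ← hs₀def]
    rw [inv_mul_lt_iff₀ hT0, mul_one]
    linarith
  have hν1 : ‖ν‖ < 1 :=
    lt_of_le_of_lt (scalar_le_norm B hB hsqB h1B (q a₁).2 ν) hy1
  have hyprod : ‖ν‖ * ‖(q a₁ : F) + ν • 1‖ < 1 := by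
    nlinarith [norm_nonneg ν, norm_nonneg ((q a₁ : F) + ν • 1)]
  have hνprod : ‖ν‖ * ‖ν‖ < 1 := by nlinarith [norm_nonneg ν]
  -- B-side Möbius transform
  obtain ⟨hmB1, hphiB⟩ := phi_eq B hB hsqB (q a₁).2 ν ν hyprod hνprod
  rw [sub_self, zero_div, zero_smul, zero_add] at hphiB
  set mB1 : F := ∑' n : ℕ, bet ν n • (((q a₁ : F) + ν•(1:F))^(n+1) - ν^(n+1)•(1:F)) with hmB1def
  have hmB1norm : ‖mB1‖ ≤ (‖ν‖ + ‖(q a₁ : F) + ν • 1‖) / (1 + ‖ν‖ * ‖(q a₁ : F) + ν • 1‖) := by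
    rw [← hphiB]
    exact mobius_norm _ ν _ le_rfl hy1.le hν1
  have hmB1lt : ‖mB1‖ < 1 :=
    lt_of_le_of_lt hmB1norm (div_lt_one_aux (norm_nonneg _) (norm_nonneg _) hν1 hy1)
  -- lift mB1 with norm < 1
  obtain ⟨a₀, ha₀⟩ := hqsurj ⟨mB1, hmB1⟩
  have hinf : Metric.infDist a₀ {k : ↥A | q k = 0} < 1 := by
    rw [← hqquot a₀, ha₀]
    exact hmB1lt
  have hne : ({k : ↥A | q k = 0}).Nonempty := ⟨0, map_zero q⟩
  obtain ⟨k₀, hk₀mem, hk₀dist⟩ := (Metric.infDist_lt_iff hne).1 hinf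
  set c₂ : ↥A := a₀ - k₀ with hc₂def
  have hc₂q : q c₂ = ⟨mB1, hmB1⟩ := by
    rw [hc₂def, map_sub, hk₀mem, sub_zero, ha₀]
  have hc₂n : ‖(c₂ : E)‖ < 1 := by
    have h1 : dist a₀ k₀ = ‖(c₂ : E)‖ := by
      rw [dist_eq_norm, hc₂def]
      rfl
    rw [← h1]
    exact hk₀dist
  -- A-side Möbius at c₂
  have hx4 : ‖ν‖ * ‖(c₂ : E) + (0:ℂ)•(1:E)‖ < 1 := by
    have h0 : (c₂ : E) + (0:ℂ)•(1:E) = (c₂ : E) := by simp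
    rw [h0]
    nlinarith [norm_nonneg ν, norm_nonneg ((c₂ : E))]
  have hν2 : ‖ν‖ * ‖(0:ℂ)‖ < 1 := by simp
  obtain ⟨hm2A, hphiA2⟩ := phi_eq A hA hsqA c₂.2 0 ν hx4 hν2
  rw [sub_zero, mul_zero, sub_zero, div_one] at hphiA2
  obtain ⟨hm2A', hm2B', heq2⟩ := tsum_trans A B hA hB hsqA hsqB q hqJ hqc c₂ 0 ν hx4 hν2
  -- B-side Möbius at q c₂ = mB1
  have hx5 : ‖ν‖ * ‖((q c₂ : ↥B) : F) + (0:ℂ)•(1:F)‖ < 1 := by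
    have h0 : ((q c₂ : ↥B) : F) + (0:ℂ)•(1:F) = ((q c₂ : ↥B) : F) := by simp
    rw [h0]
    have h2 : ‖((q c₂ : ↥B) : F)‖ ≤ ‖(c₂ : E)‖ := hqc c₂
    nlinarith [norm_nonneg ν, norm_nonneg ((q c₂ : ↥B) : F)]
  obtain ⟨hm3B, hphiB2⟩ := phi_eq B hB hsqB (q c₂).2 0 ν hx5 hν2
  rw [sub_zero, mul_zero, sub_zero, div_one] at hphiB2
  -- involution on the B side
  have hu2 : ‖conj ν • ((q a₁ : F) + ν • 1)‖ < 1 := by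
    rw [norm_smul, RCLike.norm_conj]; exact hyprod
  have hinvol := mobius_invol ((q a₁ : F) + ν • 1) ν hu2 hν1
  rw [hphiB] at hinvol
  have hcoe2 : ((q c₂ : ↥B) : F) = mB1 := congrArg Subtype.val hc₂q
  have hq0 : ((q c₂ : ↥B) : F) + (0:ℂ)•(1:F) = mB1 := by rw [hcoe2]; simp
  -- identify B-side tsum with (q a₁ : F)
  have htsumB : (∑' n : ℕ, bet ν n •
      ((((q c₂ : ↥B) : F) + (0:ℂ)•(1:F))^(n+1) - (0:ℂ)^(n+1)•(1:F))) = (q a₁ : F) := by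
    have h5 : (ν • (1:F)) + (∑' n : ℕ, bet ν n •
        ((((q c₂ : ↥B) : F) + (0:ℂ)•(1:F))^(n+1) - (0:ℂ)^(n+1)•(1:F)))
        = (q a₁ : F) + ν • 1 := by
      calc (ν • (1:F)) + (∑' n : ℕ, bet ν n •
            ((((q c₂ : ↥B) : F) + (0:ℂ)•(1:F))^(n+1) - (0:ℂ)^(n+1)•(1:F)))
          = (ν•(1:F) - (((q c₂ : ↥B) : F) + (0:ℂ)•(1:F)))
            * Ring.inverse (1 - conj ν•(((q c₂ : ↥B) : F) + (0:ℂ)•(1:F))) := hphiB2.symm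
        _ = (ν•(1:F) - mB1) * Ring.inverse (1 - conj ν • mB1) := by rw [hq0]
        _ = (q a₁ : F) + ν • 1 := hinvol
    have h6 := congrArg (fun z => z - ν • (1:F)) h5
    simpa using h6
  -- hence q of the A-side tsum is q a₁
  have hqm2 : q (⟨_, hm2A'⟩ : ↥A) = q a₁ := by
    rw [heq2]
    apply Subtype.ext
    exact htsumB
  -- the kernel element
  set k₂ : ↥A := a₁ - ⟨_, hm2A'⟩ with hk₂def
  have hk₂q : q k₂ = 0 := by
    rw [hk₂def, map_sub, hqm2, sub_self]
  -- norm bound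
  have hb1 : ‖(ν • (1:E)) + (∑' n : ℕ, bet ν n •
      (((c₂:E) + (0:ℂ)•(1:E))^(n+1) - (0:ℂ)^(n+1)•(1:E)))‖ ≤ 1 := by
    rw [← hphiA2]
    refine le_trans (mobius_norm _ ν 1 ?_ le_rfl hν1) ?_
    · have h0 : (c₂ : E) + (0:ℂ)•(1:E) = (c₂ : E) := by simp
      rw [h0]
      exact hc₂n.le
    · rw [mul_one, add_comm ‖ν‖ 1, div_self (by positivity)]
  have hnorm1 : ‖((a₁ : E) + ν • 1) - (k₂ : E)‖ ≤ 1 := by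
    have h7 : ((a₁ : E) + ν • 1) - (k₂ : E)
        = (ν • (1:E)) + (∑' n : ℕ, bet ν n •
            (((c₂:E) + (0:ℂ)•(1:E))^(n+1) - (0:ℂ)^(n+1)•(1:E))) := by
      rw [hk₂def]
      push_cast
      abel
    rw [h7]
    exact hb1
  -- rescale
  refine ⟨(T:ℂ) • k₂, by rw [map_smul, hk₂q, smul_zero], ?_⟩
  have h8 : ((a : E) + μ • 1) - (((T:ℂ) • k₂ : ↥A) : E)
      = (T:ℂ) • (((a₁ : E) + ν • 1) - (k₂ : E)) := by
    have ha : (a : E) = (T:ℂ) • (a₁ : E) := by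
      rw [ha₁def]
      push_cast
      rw [smul_smul, mul_inv_cancel₀ hTne, one_smul]
    have hμ : μ • (1:E) = (T:ℂ) • (ν • (1:E)) := by
      rw [hνdef, smul_smul, mul_div_cancel₀ _ hTne]
    rw [ha, hμ]
    push_cast
    rw [smul_sub, smul_add]
  rw [h8, norm_smul]
  have hTn : ‖((T:ℝ):ℂ)‖ = T := by rw [Complex.norm_real, Real.norm_of_nonneg hT0.le]
  rw [hTn]
  calc T * ‖((a₁ : E) + ν • 1) - (k₂ : E)‖ ≤ T * 1 :=
        mul_le_mul_of_nonneg_left hnorm1 hT0.le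
    _ = s₀ + ε := by rw [mul_one]

end Meyer2

end Stmt16Aux



open Stmt16Aux

/-- Suppose `A ⊆ B(H)` and `B ⊆ B(K)` are closed Jordan subalgebras of the unital
Jordan operator algebras `B(H)`, `B(K)` with `1 ∉ A`, `1 ∉ B`, and `q : A → B` is
a contractive-continuous Jordan homomorphism which is a 1-quotient map (i.e.
surjective, with `‖q a‖` equal to the distance from `a` to `ker q`), whose kernel
is approximately unital.  Then any unital (continuous linear) extension
`θ : A + ℂ1 → B + ℂ1` of `q` is a 1-quotient map. -/
theorem stmt16 {H K : Type*}
    [NormedAddCommGroup H] [InnerProductSpace ℂ H] [CompleteSpace H]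
    [NormedAddCommGroup K] [InnerProductSpace ℂ K] [CompleteSpace K]
    (A : Submodule ℂ (H →L[ℂ] H)) (hA : IsClosed (A : Set (H →L[ℂ] H)))
    (hsqA : ∀ a ∈ A, a * a ∈ A) (h1A : (1 : H →L[ℂ] H) ∉ A)
    (B : Submodule ℂ (K →L[ℂ] K)) (hB : IsClosed (B : Set (K →L[ℂ] K)))
    (hsqB : ∀ b ∈ B, b * b ∈ B) (h1B : (1 : K →L[ℂ] K) ∉ B)
    (q : ↥A →L[ℂ] ↥B)
    (hqJordan : ∀ a : ↥A,
      ((q ⟨(a : H →L[ℂ] H) * (a : H →L[ℂ] H), hsqA _ a.2⟩ : ↥B) : K →L[ℂ] K)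
        = (q a : K →L[ℂ] K) * (q a : K →L[ℂ] K))
    (hqsurj : Function.Surjective q)
    (hqquot : ∀ a : ↥A, ‖q a‖ = Metric.infDist a {k : ↥A | q k = 0})
    (hkercai : ∃ (ι : Type) (l : Filter ι) (e : ι → ↥A), l.NeBot ∧
      (∀ i, q (e i) = 0 ∧ ‖e i‖ ≤ 1) ∧
      ∀ a : ↥A, q a = 0 → Filter.Tendsto
        (fun i => ((1 : ℂ) / 2) •
          ((e i : H →L[ℂ] H) * a + (a : H →L[ℂ] H) * (e i : H →L[ℂ] H)))
        l (nhds (a : H →L[ℂ] H)))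
    -- the unitizations `A¹ = A + ℂ1` and `B¹ = B + ℂ1`
    (A1 : Submodule ℂ (H →L[ℂ] H)) (hA1 : A1 = A ⊔ (ℂ ∙ (1 : H →L[ℂ] H)))
    (h1A1 : (1 : H →L[ℂ] H) ∈ A1) (hleA : A ≤ A1)
    (B1 : Submodule ℂ (K →L[ℂ] K)) (hB1 : B1 = B ⊔ (ℂ ∙ (1 : K →L[ℂ] K)))
    (h1B1 : (1 : K →L[ℂ] K) ∈ B1) (hleB : B ≤ B1)
    (θ : ↥A1 →L[ℂ] ↥B1)
    (hθ1 : θ ⟨1, h1A1⟩ = ⟨1, h1B1⟩)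
    (hθq : ∀ a : ↥A, θ ⟨(a : H →L[ℂ] H), hleA a.2⟩ = ⟨((q a : ↥B) : K →L[ℂ] K), hleB (q a).2⟩) :
    Function.Surjective θ ∧
      ∀ z : ↥A1, ‖θ z‖ = Metric.infDist z {k : ↥A1 | θ k = 0} := by
  have h1ne : (1 : H →L[ℂ] H) ≠ 0 := fun h => h1A (by rw [h]; exact A.zero_mem)
  have h1neK : (1 : K →L[ℂ] K) ≠ 0 := fun h => h1B (by rw [h]; exact B.zero_mem)
  have hHnt : Nontrivial H := by
    by_contra hcon
    rw [not_nontrivial_iff_subsingleton] at hcon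
    exact h1ne (Subsingleton.elim _ _)
  have hKnt : Nontrivial K := by
    by_contra hcon
    rw [not_nontrivial_iff_subsingleton] at hcon
    exact h1neK (Subsingleton.elim _ _)
  have hqJ : ∀ (a : ↥A) (h : (a : H →L[ℂ] H)*(a : H →L[ℂ] H) ∈ A),
      ((q ⟨(a : H →L[ℂ] H)*(a : H →L[ℂ] H), h⟩ : ↥B) : K →L[ℂ] K)
        = (q a : K →L[ℂ] K) * (q a : K →L[ℂ] K) := fun a _ => hqJordan a
  have hqc : ∀ a : ↥A, ‖q a‖ ≤ ‖a‖ := by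
    intro a
    rw [hqquot a]
    calc Metric.infDist a {k : ↥A | q k = 0}
        ≤ dist a 0 := Metric.infDist_le_dist_of_mem (map_zero q)
      _ = ‖a‖ := dist_zero_right a
  have hdecA : ∀ z : ↥A1, ∃ (a : ↥A) (μ : ℂ),
      (z : H →L[ℂ] H) = (a : H →L[ℂ] H) + μ • 1 := by
    intro z
    have hz : (z : H →L[ℂ] H) ∈ A ⊔ (ℂ ∙ (1 : H →L[ℂ] H)) := by
      rw [← hA1]
      exact z.2
    obtain ⟨a, ha, s, hs, hsum⟩ := Submodule.mem_sup.1 hz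
    obtain ⟨μ, hμ⟩ := Submodule.mem_span_singleton.1 hs
    exact ⟨⟨a, ha⟩, μ, by rw [← hsum, ← hμ]⟩
  have hdecB : ∀ z : ↥B1, ∃ (b : ↥B) (μ : ℂ),
      (z : K →L[ℂ] K) = (b : K →L[ℂ] K) + μ • 1 := by
    intro z
    have hz : (z : K →L[ℂ] K) ∈ B ⊔ (ℂ ∙ (1 : K →L[ℂ] K)) := by
      rw [← hB1]
      exact z.2
    obtain ⟨b, hb, s, hs, hsum⟩ := Submodule.mem_sup.1 hz
    obtain ⟨μ, hμ⟩ := Submodule.mem_span_singleton.1 hs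
    exact ⟨⟨b, hb⟩, μ, by rw [← hsum, ← hμ]⟩
  have hmemA1 : ∀ (a : ↥A) (ρ : ℂ), (a : H →L[ℂ] H) + ρ • 1 ∈ A1 :=
    fun a ρ => A1.add_mem (hleA a.2) (A1.smul_mem ρ h1A1)
  have hθact : ∀ (a : ↥A) (ρ : ℂ),
      ((θ ⟨(a : H →L[ℂ] H) + ρ • 1, hmemA1 a ρ⟩ : ↥B1) : K →L[ℂ] K)
        = ((q a : ↥B) : K →L[ℂ] K) + ρ • 1 := by
    intro a ρ
    have hsplit : (⟨(a : H →L[ℂ] H) + ρ • 1, hmemA1 a ρ⟩ : ↥A1)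
        = ⟨(a : H →L[ℂ] H), hleA a.2⟩ + ρ • ⟨1, h1A1⟩ := by
      apply Subtype.ext
      push_cast
      rfl
    rw [hsplit, map_add, map_smul, hθq a, hθ1]
    push_cast
    rfl
  constructor
  · -- surjectivity
    intro w
    obtain ⟨b, ρ, hb⟩ := hdecB w
    obtain ⟨a₀, ha₀⟩ := hqsurj b
    refine ⟨⟨(a₀ : H →L[ℂ] H) + ρ • 1, hmemA1 a₀ ρ⟩, ?_⟩
    apply Subtype.ext
    rw [hθact a₀ ρ, ha₀]
    exact hb.symm
  · -- quotient property
    intro z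
    obtain ⟨a, μ, hz⟩ := hdecA z
    have hzval : z = ⟨(a : H →L[ℂ] H) + μ • 1, hmemA1 a μ⟩ := Subtype.ext hz
    have hθz : ((θ z : ↥B1) : K →L[ℂ] K) = ((q a : ↥B) : K →L[ℂ] K) + μ • 1 := by
      rw [hzval]
      exact hθact a μ
    have hnormθz : ‖θ z‖ = ‖((q a : ↥B) : K →L[ℂ] K) + μ • 1‖ := by
      rw [← hθz]
      rfl
    have hSne : ({k : ↥A1 | θ k = 0}).Nonempty := ⟨0, map_zero θ⟩
    have hdist : ∀ u v : ↥A1, dist u v = ‖(u : H →L[ℂ] H) - (v : H →L[ℂ] H)‖ := by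
      intro u v
      rw [dist_eq_norm]
      rfl
    have hker : ∀ w : ↥A1, θ w = 0 →
        ∃ k : ↥A, q k = 0 ∧ (w : H →L[ℂ] H) = (k : H →L[ℂ] H) := by
      intro w hw
      obtain ⟨k, ρ, hk⟩ := hdecA w
      have hw' : w = ⟨(k : H →L[ℂ] H) + ρ • 1, hmemA1 k ρ⟩ := Subtype.ext hk
      have h1 : ((θ w : ↥B1) : K →L[ℂ] K) = ((q k : ↥B) : K →L[ℂ] K) + ρ • 1 := by
        rw [hw']
        exact hθact k ρ
      rw [hw] at h1
      have h1' : ((q k : ↥B) : K →L[ℂ] K) + ρ • 1 = 0 := by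
        rw [← h1]
        rfl
      by_cases hρ : ρ = 0
      · subst hρ
        simp only [zero_smul, add_zero] at h1'
        refine ⟨k, Subtype.ext h1', by rw [hk]; simp⟩
      · exfalso
        apply h1B
        have h2 : ρ • (1 : K →L[ℂ] K) = -((q k : ↥B) : K →L[ℂ] K) :=
          eq_neg_of_add_eq_zero_right h1'
        have h3 : (1 : K →L[ℂ] K) = ρ⁻¹ • (-((q k : ↥B) : K →L[ℂ] K)) := by
          rw [← h2, smul_smul, inv_mul_cancel₀ hρ, one_smul]
        rw [h3]
        exact B.smul_mem _ (B.neg_mem (q k).2)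
    apply le_antisymm
    · -- ‖θ z‖ ≤ infDist
      by_contra hcon
      push_neg at hcon
      obtain ⟨w, hwmem, hwdist⟩ := (Metric.infDist_lt_iff hSne).1 hcon
      obtain ⟨k, hk0, hkval⟩ := hker w hwmem
      have hd : dist z w = ‖((a - k : ↥A) : H →L[ℂ] H) + μ • 1‖ := by
        rw [hdist z w, hz, hkval]
        push_cast
        congr 1
        abel
      have hle : ‖θ z‖ ≤ dist z w := by
        rw [hnormθz, hd]
        have hqak : q (a - k) = q a := by rw [map_sub, hk0, sub_zero]
        calc ‖((q a : ↥B) : K →L[ℂ] K) + μ • 1‖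
            = ‖((q (a - k) : ↥B) : K →L[ℂ] K) + μ • 1‖ := by rw [hqak]
          _ ≤ ‖((a - k : ↥A) : H →L[ℂ] H) + μ • 1‖ :=
              meyer_le A hA hsqA h1A B hB hsqB q hqJ hqc (a - k) μ
      linarith
    · -- infDist ≤ ‖θ z‖
      refine le_of_forall_pos_le_add ?_
      intro ε hε
      obtain ⟨k, hk0, hkb⟩ :=
        meyer_ge A hA hsqA B hB hsqB h1B q hqJ hqc hqsurj hqquot a μ ε hε
      have hkmem : (⟨(k : H →L[ℂ] H), hleA k.2⟩ : ↥A1) ∈ {k : ↥A1 | θ k = 0} := by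
        show θ _ = 0
        rw [hθq k]
        apply Subtype.ext
        rw [hk0]
        rfl
      calc Metric.infDist z {k : ↥A1 | θ k = 0}
          ≤ dist z ⟨(k : H →L[ℂ] H), hleA k.2⟩ := Metric.infDist_le_dist_of_mem hkmem
        _ = ‖((a : H →L[ℂ] H) + μ • 1) - (k : H →L[ℂ] H)‖ := by
            rw [hdist, hz]
        _ ≤ ‖θ z‖ + ε := by
            rw [hnormθz]
            exact hkb
end
end

section
/- Let E₂ ⊂ M₄(ℂ) be the Jordan operator algebra of matrices α(E₁₂+E₃₄) + β(E₁₃−E₂₄), and F₂ ⊂ M₆(ℂ) the operator algebra of matrices that are zero except for the top-right 3×3 block equal to αE₁₂' + βE₁₃' embedded appropriately (an algebra with zero associative product). Then E₂ and F₂ are completely isometrically isomorphic as Jordan operator algebras (both with zero Jordan product), via the map sending the element with parameters (α, β) in E₂ to the one with parameters (α, β) in F₂. -/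
set_option synthInstance.maxHeartbeats 1000000
set_option maxHeartbeats 1000000

open Matrix

/-- The generic element of `E₂ ⊆ M₄(ℂ)`. -/
def E2elt (α β : ℂ) : Matrix (Fin 4) (Fin 4) ℂ :=
  !![0, α, β, 0; 0, 0, 0, -β; 0, 0, 0, α; 0, 0, 0, 0]

/-- The generic element of `F₂ ⊆ M₆(ℂ)`: zero except for the top-right `3 × 3`
block, which is the corner `G` of `E₂` (first column and last row removed). -/
def F2elt (α β : ℂ) : Matrix (Fin 6) (Fin 6) ℂ :=
  !![0, 0, 0, α, β, 0;
     0, 0, 0, 0, 0, -β;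
     0, 0, 0, 0, 0, α;
     0, 0, 0, 0, 0, 0;
     0, 0, 0, 0, 0, 0;
     0, 0, 0, 0, 0, 0]

/-- The amplification of a parametrized family to `Mₙ`, as an operator on a
Euclidean space. -/
noncomputable def amplification {d : ℕ} (m : ℂ → ℂ → Matrix (Fin d) (Fin d) ℂ) {n : ℕ}
    (α β : Matrix (Fin n) (Fin n) ℂ) :
    EuclideanSpace ℂ (Fin n × Fin d) →L[ℂ] EuclideanSpace ℂ (Fin n × Fin d) :=
  Matrix.toEuclideanCLM (𝕜 := ℂ)
    (Matrix.of fun p q : Fin n × Fin d => m (α p.1 q.1) (β p.1 q.1) p.2 q.2)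

lemma ampl_apply {d : ℕ} (m : ℂ → ℂ → Matrix (Fin d) (Fin d) ℂ) {n : ℕ}
    (α β : Matrix (Fin n) (Fin n) ℂ) (x : EuclideanSpace ℂ (Fin n × Fin d))
    (i : Fin n) (p : Fin d) :
    amplification m α β x (i, p) = ∑ j, ∑ q, m (α i j) (β i j) p q * x (j, q) := by
  have h : amplification m α β x (i, p) =
      Matrix.mulVec (Matrix.of fun p q : Fin n × Fin d =>
        m (α p.1 q.1) (β p.1 q.1) p.2 q.2) (fun k => x k) (i, p) := rfl
  rw [h]
  simp [Matrix.mulVec, dotProduct, Fintype.sum_prod_type]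

theorem cons_val_five' {A : Type*} {m : ℕ} (x : A) (u : Fin (m + 5) → A) :
    Matrix.vecCons x u 5 = Matrix.vecHead (Matrix.vecTail (Matrix.vecTail
      (Matrix.vecTail (Matrix.vecTail u)))) :=
  rfl

lemma rest_norm_le {ι κ : Type*} [Fintype ι] [Fintype κ] [DecidableEq κ]
    (g : ι → κ) (hg : Function.Injective g)
    (x : EuclideanSpace ℂ κ) (y : EuclideanSpace ℂ ι) (hy : ∀ i, y i = x (g i)) :
    ‖y‖ ≤ ‖x‖ := by
  rw [EuclideanSpace.norm_eq, EuclideanSpace.norm_eq]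
  apply Real.sqrt_le_sqrt
  calc ∑ i, ‖y i‖ ^ 2 = ∑ k ∈ Finset.univ.image g, ‖x k‖ ^ 2 := by
        rw [Finset.sum_image (fun a _ b _ h => hg h)]
        exact Finset.sum_congr rfl fun i _ => by rw [hy]
    _ ≤ ∑ k, ‖x k‖ ^ 2 :=
        Finset.sum_le_sum_of_subset_of_nonneg (Finset.subset_univ _)
          (fun k _ _ => by positivity)

lemma ext_norm_le {ι κ : Type*} [Fintype ι] [Fintype κ] [DecidableEq κ]
    (g : ι → κ) (g' : κ → ι) (hgg : ∀ i, g' (g i) = i)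
    (x : EuclideanSpace ℂ ι) (y : EuclideanSpace ℂ κ)
    (hy : ∀ k, y k = if g (g' k) = k then x (g' k) else 0) :
    ‖y‖ ≤ ‖x‖ := by
  have hginj : Function.Injective g := fun a b h => by rw [← hgg a, h, hgg]
  rw [EuclideanSpace.norm_eq, EuclideanSpace.norm_eq]
  apply Real.sqrt_le_sqrt
  calc ∑ k, ‖y k‖ ^ 2 = ∑ k ∈ Finset.univ.image g, ‖y k‖ ^ 2 := by
        refine (Finset.sum_subset (Finset.subset_univ _) fun k _ hk => ?_).symm
        have hne : ¬ (g (g' k) = k) := fun h =>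
          hk (Finset.mem_image.2 ⟨g' k, Finset.mem_univ _, h⟩)
        rw [hy, if_neg hne]
        simp
    _ = ∑ i, ‖y (g i)‖ ^ 2 := Finset.sum_image (fun a _ b _ h => hginj h)
    _ ≤ ∑ i, ‖x i‖ ^ 2 := by
        refine Finset.sum_le_sum fun i _ => ?_
        rw [hy, hgg, if_pos rfl]

section FinHelpers

lemma fv6_0 : ((0 : Fin 6) : ℕ) = 0 := rfl
lemma fv6_1 : ((1 : Fin 6) : ℕ) = 1 := rfl
lemma fv6_2 : ((2 : Fin 6) : ℕ) = 2 := rfl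
lemma fv6_3 : ((3 : Fin 6) : ℕ) = 3 := rfl
lemma fv6_4 : ((4 : Fin 6) : ℕ) = 4 := rfl
lemma fv6_5 : ((5 : Fin 6) : ℕ) = 5 := rfl
lemma fv4_0 : ((0 : Fin 4) : ℕ) = 0 := rfl
lemma fv4_1 : ((1 : Fin 4) : ℕ) = 1 := rfl
lemma fv4_2 : ((2 : Fin 4) : ℕ) = 2 := rfl
lemma fv4_3 : ((3 : Fin 4) : ℕ) = 3 := rfl
lemma fmk4_0 (h : 0 < 4) : (⟨0, h⟩ : Fin 4) = 0 := rfl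
lemma fmk4_1 (h : 1 < 4) : (⟨1, h⟩ : Fin 4) = 1 := rfl
lemma fmk4_2 (h : 2 < 4) : (⟨2, h⟩ : Fin 4) = 2 := rfl
lemma fmk4_3 (h : 3 < 4) : (⟨3, h⟩ : Fin 4) = 3 := rfl
lemma fmk6_0 (h : 0 < 6) : (⟨0, h⟩ : Fin 6) = 0 := rfl
lemma fmk6_1 (h : 1 < 6) : (⟨1, h⟩ : Fin 6) = 1 := rfl
lemma fmk6_2 (h : 2 < 6) : (⟨2, h⟩ : Fin 6) = 2 := rfl
lemma fmk6_3 (h : 3 < 6) : (⟨3, h⟩ : Fin 6) = 3 := rfl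
lemma fmk6_4 (h : 4 < 6) : (⟨4, h⟩ : Fin 6) = 4 := rfl
lemma fmk6_5 (h : 5 < 6) : (⟨5, h⟩ : Fin 6) = 5 := rfl

end FinHelpers

/-- `E₂` and `F₂` are completely isometrically isomorphic Jordan operator
algebras (both with identically zero Jordan product), via `(α, β) ↦ (α, β)`. -/
theorem stmt17 :
    (∀ α β γ δ : ℂ, E2elt α β * E2elt γ δ + E2elt γ δ * E2elt α β = 0) ∧
    (∀ α β γ δ : ℂ, F2elt α β * F2elt γ δ + F2elt γ δ * F2elt α β = 0) ∧
    ∀ (n : ℕ) (α β : Matrix (Fin n) (Fin n) ℂ),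
      ‖amplification E2elt α β‖ = ‖amplification F2elt α β‖ := by
  refine ⟨?_, ?_, ?_⟩
  · intro α β γ δ
    ext i j
    fin_cases i <;> fin_cases j <;>
      simp [E2elt, Matrix.mul_apply, Fin.sum_univ_four, Matrix.vecHead, Matrix.vecTail] <;> ring
  · intro α β γ δ
    ext i j
    fin_cases i <;> fin_cases j <;>
      simp [F2elt, Matrix.mul_apply, Fin.sum_univ_six, cons_val_five', Matrix.vecHead,
        Matrix.vecTail] <;> ring
  · intro n α β
    apply le_antisymm
    · -- ‖E ampl‖ ≤ ‖F ampl‖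
      apply ContinuousLinearMap.opNorm_le_bound _ (norm_nonneg _)
      intro x
      set x' : EuclideanSpace ℂ (Fin n × Fin 6) :=
        (WithLp.toLp 2 (fun k : Fin n × Fin 6 =>
          if (2 : ℕ) ≤ (k.2 : ℕ) then x (k.1, ![0, 0, 0, 1, 2, 3] k.2) else 0))
        with hx'
      set y := amplification F2elt α β x' with hy
      have key : ∀ i : Fin n, ∀ p : Fin 4,
          amplification E2elt α β x (i, p) = y (i, ![0, 1, 2, 3] p) := by
        intro i p
        rw [hy, ampl_apply, ampl_apply]
        fin_cases p <;>
          · refine Finset.sum_congr rfl fun j _ => ?_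
            simp only [hx']
            norm_num [E2elt, F2elt, Fin.sum_univ_four, Fin.sum_univ_six, cons_val_five',
                Matrix.cons_val_two, Matrix.cons_val_three, Matrix.cons_val_four,
              Matrix.vecHead, Matrix.vecTail, fv6_0, fv6_1, fv6_2, fv6_3, fv6_4, fv6_5,
              -mul_eq_mul_left_iff]
            try rfl
      have h1 : ‖amplification E2elt α β x‖ ≤ ‖y‖ := by
        refine rest_norm_le
          (fun k : Fin n × Fin 4 => ((k.1, ![0, 1, 2, 3] k.2) : Fin n × Fin 6))
          ?_ y (amplification E2elt α β x) ?_
        · rintro ⟨a, b⟩ ⟨c, d⟩ h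
          rw [Prod.mk.injEq] at h
          refine Prod.ext h.1 ?_
          have h2 := h.2
          fin_cases b <;> fin_cases d <;> revert h2 <;> dsimp only <;> decide
        · rintro ⟨i, p⟩; exact key i p
      have h2 : ‖y‖ ≤ ‖amplification F2elt α β‖ * ‖x'‖ :=
        (amplification F2elt α β).le_opNorm x'
      have h3 : ‖x'‖ ≤ ‖x‖ := by
        refine ext_norm_le
          (fun k : Fin n × Fin 4 => ((k.1, ![2, 3, 4, 5] k.2) : Fin n × Fin 6))
          (fun k : Fin n × Fin 6 => ((k.1, ![0, 0, 0, 1, 2, 3] k.2) : Fin n × Fin 4))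
          ?_ x x' ?_
        · rintro ⟨i, p⟩
          refine Prod.ext rfl ?_
          fin_cases p <;> rfl
        · rintro ⟨i, q⟩
          simp only [hx']
          fin_cases q <;>
            norm_num [Matrix.vecHead, Matrix.vecTail, cons_val_five', Prod.mk.injEq,
                Matrix.cons_val_two, Matrix.cons_val_three, Matrix.cons_val_four,
              fv6_0, fv6_1, fv6_2, fv6_3, fv6_4, fv6_5, fmk6_0, fmk6_1, fmk6_2, fmk6_3,
              fmk6_4, fmk6_5, fmk4_0, fmk4_1, fmk4_2, fmk4_3, Fin.ext_iff]
      calc ‖amplification E2elt α β x‖ ≤ ‖y‖ := h1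
        _ ≤ ‖amplification F2elt α β‖ * ‖x'‖ := h2
        _ ≤ ‖amplification F2elt α β‖ * ‖x‖ :=
            mul_le_mul_of_nonneg_left h3 (norm_nonneg _)
    · -- ‖F ampl‖ ≤ ‖E ampl‖
      apply ContinuousLinearMap.opNorm_le_bound _ (norm_nonneg _)
      intro x
      set x' : EuclideanSpace ℂ (Fin n × Fin 4) :=
        (WithLp.toLp 2 (fun k : Fin n × Fin 4 => x (k.1, ![2, 3, 4, 5] k.2))) with hx'
      set y := amplification E2elt α β x' with hy
      have key : ∀ k : Fin n × Fin 6,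
          amplification F2elt α β x k =
            if (fun k : Fin n × Fin 4 => ((k.1, ![0, 1, 2, 3] k.2) : Fin n × Fin 6))
                ((fun k : Fin n × Fin 6 =>
                  ((k.1, ![0, 1, 2, 3, 3, 3] k.2) : Fin n × Fin 4)) k) = k
            then y ((fun k : Fin n × Fin 6 =>
                ((k.1, ![0, 1, 2, 3, 3, 3] k.2) : Fin n × Fin 4)) k)
            else 0 := by
        rintro ⟨i, q⟩
        simp only [hy]
        fin_cases q <;>
          · norm_num [Matrix.vecHead, Matrix.vecTail, cons_val_five', Prod.mk.injEq,
                Matrix.cons_val_two, Matrix.cons_val_three, Matrix.cons_val_four,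
              fv6_0, fv6_1, fv6_2, fv6_3, fv6_4, fv6_5, fmk6_0, fmk6_1, fmk6_2, fmk6_3,
              fmk6_4, fmk6_5, fmk4_0, fmk4_1, fmk4_2, fmk4_3, Fin.ext_iff]
            first
            | (rw [ampl_apply, ampl_apply]
               refine Finset.sum_congr rfl fun j _ => ?_
               simp only [hx']
               norm_num [E2elt, F2elt, Fin.sum_univ_four, Fin.sum_univ_six, cons_val_five',
                Matrix.cons_val_two, Matrix.cons_val_three, Matrix.cons_val_four,
                 Matrix.vecHead, Matrix.vecTail, fv6_0, fv6_1, fv6_2, fv6_3, fv6_4, fv6_5,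
                 -mul_eq_mul_left_iff]
               try rfl)
            | (rw [ampl_apply]
               refine Finset.sum_eq_zero fun j _ => ?_
               norm_num [F2elt, Fin.sum_univ_six, cons_val_five', Matrix.vecHead,
                 Matrix.cons_val_two, Matrix.cons_val_three, Matrix.cons_val_four,
                 Matrix.vecTail])
      have h1 : ‖amplification F2elt α β x‖ ≤ ‖y‖ := by
        refine ext_norm_le
          (fun k : Fin n × Fin 4 => ((k.1, ![0, 1, 2, 3] k.2) : Fin n × Fin 6))
          (fun k : Fin n × Fin 6 => ((k.1, ![0, 1, 2, 3, 3, 3] k.2) : Fin n × Fin 4))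
          ?_ y (amplification F2elt α β x) ?_
        · rintro ⟨i, p⟩
          refine Prod.ext rfl ?_
          fin_cases p <;> rfl
        · exact key
      have h2 : ‖y‖ ≤ ‖amplification E2elt α β‖ * ‖x'‖ :=
        (amplification E2elt α β).le_opNorm x'
      have h3 : ‖x'‖ ≤ ‖x‖ := by
        refine rest_norm_le
          (fun k : Fin n × Fin 4 => ((k.1, ![2, 3, 4, 5] k.2) : Fin n × Fin 6))
          ?_ x x' ?_
        · rintro ⟨a, b⟩ ⟨c, d⟩ h
          rw [Prod.mk.injEq] at h
          refine Prod.ext h.1 ?_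
          have h2 := h.2
          fin_cases b <;> fin_cases d <;> revert h2 <;> dsimp only <;> decide
        · rintro ⟨i, p⟩; simp only [hx']
      calc ‖amplification F2elt α β x‖ ≤ ‖y‖ := h1
        _ ≤ ‖amplification E2elt α β‖ * ‖x'‖ := h2
        _ ≤ ‖amplification E2elt α β‖ * ‖x‖ :=
            mul_le_mul_of_nonneg_left h3 (norm_nonneg _)
end

section
/- Let A be a Jordan operator algebra and x ∈ A real positive such that the closed algebra joa(x) generated by x is unital with identity e. Then e x e = x, setting y to be the inverse-like element: there exists y ∈ joa(x) with xyx = x. -/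
set_option synthInstance.maxHeartbeats 1000000
set_option maxHeartbeats 1000000

/-- If `x` is a real positive element of a Jordan operator algebra `A` such that
the closed algebra `joa(x)` generated by `x` is unital with identity `e`, then
`e x e = x` and there exists `y ∈ joa(x)` with `x y x = x`. -/
theorem stmt19 {H : Type*} [NormedAddCommGroup H] [InnerProductSpace ℂ H] [CompleteSpace H]
    (A : Submodule ℂ (H →L[ℂ] H)) (hA : IsClosed (A : Set (H →L[ℂ] H)))
    (hsq : ∀ a ∈ A, a * a ∈ A)
    (x : H →L[ℂ] H) (hx : x ∈ A) (hpos : (x + star x).IsPositive)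
    (e : H →L[ℂ] H)
    (he : e ∈ closure ((NonUnitalAlgebra.adjoin ℂ {x} :
        NonUnitalSubalgebra ℂ (H →L[ℂ] H)) : Set (H →L[ℂ] H)))
    (hunit : ∀ z ∈ closure ((NonUnitalAlgebra.adjoin ℂ {x} :
        NonUnitalSubalgebra ℂ (H →L[ℂ] H)) : Set (H →L[ℂ] H)),
      e * z = z ∧ z * e = z) :
    e * x * e = x ∧ ∃ y ∈ closure ((NonUnitalAlgebra.adjoin ℂ {x} :
        NonUnitalSubalgebra ℂ (H →L[ℂ] H)) : Set (H →L[ℂ] H)), x * y * x = x := by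
  have hxadj : x ∈ (NonUnitalAlgebra.adjoin ℂ ({x} : Set (H →L[ℂ] H))) :=
    NonUnitalAlgebra.self_mem_adjoin_singleton ℂ x
  have hxc : x ∈ closure ((NonUnitalAlgebra.adjoin ℂ {x} :
      NonUnitalSubalgebra ℂ (H →L[ℂ] H)) : Set (H →L[ℂ] H)) := subset_closure hxadj
  refine ⟨by rw [(hunit x hxc).1, (hunit x hxc).2], ?_⟩
  let S : NonUnitalSubalgebra ℂ (H →L[ℂ] H) := NonUnitalAlgebra.elemental ℂ x
  have hmemS : ∀ a : H →L[ℂ] H, a ∈ S ↔ a ∈ closure ((NonUnitalAlgebra.adjoin ℂ {x} :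
      NonUnitalSubalgebra ℂ (H →L[ℂ] H)) : Set (H →L[ℂ] H)) := fun a => Iff.rfl
  have heS : e ∈ S := (hmemS e).mpr he
  have hxS : x ∈ S := (hmemS x).mpr hxc
  letI : One S := ⟨⟨e, heS⟩⟩
  have hone : ((1 : S) : H →L[ℂ] H) = e := rfl
  letI ringS : CommRing S :=
    { (inferInstance : NonUnitalCommRing S) with
      one := 1
      one_mul := fun z => Subtype.ext (hunit (z : H →L[ℂ] H) ((hmemS _).mp z.2)).1
      mul_one := fun z => Subtype.ext (hunit (z : H →L[ℂ] H) ((hmemS _).mp z.2)).2 }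
  letI : NormedCommRing S :=
    { ringS, (inferInstance : NonUnitalNormedRing S) with }
  letI : NormedAlgebra ℂ S :=
    { Algebra.ofModule smul_mul_assoc mul_smul_comm with
      norm_smul_le := fun r z => by exact norm_smul_le r (z : H →L[ℂ] H) }
  have hunitS : IsUnit (⟨x, hxS⟩ : S) := by
    by_contra hcon
    obtain ⟨φ, hφ⟩ := WeakDual.CharacterSpace.exists_apply_eq_zero hcon
    have key : ∀ a (ha : a ∈ NonUnitalAlgebra.adjoin ℂ ({x} : Set (H →L[ℂ] H))),
        φ (⟨a, (hmemS a).mpr (subset_closure ha)⟩ : S) = 0 := by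
      intro a ha
      induction ha using NonUnitalAlgebra.adjoin_induction with
      | mem y hy =>
        obtain rfl : y = x := hy
        exact hφ
      | add a b ha hb pa pb =>
        have h2 : (⟨a + b, (hmemS _).mpr (subset_closure (add_mem ha hb))⟩ : S)
            = ⟨a, (hmemS a).mpr (subset_closure ha)⟩
              + ⟨b, (hmemS b).mpr (subset_closure hb)⟩ := rfl
        rw [h2, map_add, pa, pb, add_zero]
      | zero => exact map_zero φ
      | mul a b ha hb pa pb =>
        have h2 : (⟨a * b, (hmemS _).mpr (subset_closure (mul_mem ha hb))⟩ : S)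
            = ⟨a, (hmemS a).mpr (subset_closure ha)⟩
              * ⟨b, (hmemS b).mpr (subset_closure hb)⟩ := rfl
        rw [h2, map_mul, pa, pb, mul_zero]
      | smul r a ha pa =>
        have h2 : (⟨r • a, (hmemS _).mpr (subset_closure (SMulMemClass.smul_mem r ha))⟩ : S)
            = r • (⟨a, (hmemS a).mpr (subset_closure ha)⟩ : S) := rfl
        rw [h2, map_smul, pa, smul_zero]
    have hzero : ∀ s : S, φ s = 0 := by
      intro s
      obtain ⟨u, hu, hlim⟩ := mem_closure_iff_seq_limit.mp ((hmemS _).mp s.2)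
      have hlim' : Filter.Tendsto (fun n => (⟨u n, (hmemS _).mpr (subset_closure (hu n))⟩ : S))
          Filter.atTop (nhds s) := by
        rw [tendsto_subtype_rng]
        exact hlim
      have := ((map_continuous φ).continuousAt.tendsto.comp hlim' : _)
      have hzeros : ∀ n, φ (⟨u n, (hmemS _).mpr (subset_closure (hu n))⟩ : S) = 0 :=
        fun n => key (u n) (hu n)
      simp only [Function.comp_def, hzeros] at this
      exact (tendsto_nhds_unique this tendsto_const_nhds).symm ▸ rfl
    have h1 : φ 1 = 1 := map_one φ
    rw [hzero 1] at h1
    exact zero_ne_one h1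
  obtain ⟨u, hu⟩ := hunitS
  refine ⟨((u⁻¹ : Sˣ) : S), (hmemS _).mp ((u⁻¹ : Sˣ) : S).2, ?_⟩
  have hxy : x * (((u⁻¹ : Sˣ) : S) : H →L[ℂ] H) = e := by
    have h := congrArg (fun z : S => (z : H →L[ℂ] H)) u.mul_inv
    rw [hu] at h
    exact h
  rw [hxy, (hunit x hxc).1]
end
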